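/- arXiv:1703.00344 — 5 statements merged into one kernel-verified Lean document; each statement's English description precedes it below -/
import Mathlib

section
/- Let m, n ≥ 2. Suppose Φ₁ is a positive trace-preserving map on mn×mn complex matrices that is absolutely separating with respect to the bipartition m|n, and Φ₂ is a unital quantum channel on mn×mn matrices, i.e., Φ₂ is completely positive, trace-preserving, and Φ₂[I] = I. Then the composition Φ₂ ∘ Φ₁ is absolutely separating with respect to the bipartition m|n. -/
open Matrix Kronecker BigOperators
open scoped ComplexOrder

noncomputable section


def IsDM {ι : Type*} [Fintype ι] (ρ : Matrix ι ι ℂ) : Prop :=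
  ρ.PosSemidef ∧ ρ.trace = 1

def IsSep {ι κ : Type*} [Fintype ι] [Fintype κ]
    (ρ : Matrix (ι × κ) (ι × κ) ℂ) : Prop :=
  ∃ (k : ℕ) (p : Fin k → ℝ) (A : Fin k → Matrix ι ι ℂ) (B : Fin k → Matrix κ κ ℂ),
    (∀ i, 0 ≤ p i) ∧ (∑ i, p i = 1) ∧ (∀ i, IsDM (A i)) ∧ (∀ i, IsDM (B i)) ∧
    ρ = ∑ i, (p i : ℂ) • (A i ⊗ₖ B i)

def IsAbsSep {ι κ : Type*} [Fintype ι] [Fintype κ] [DecidableEq ι] [DecidableEq κ]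
    (ρ : Matrix (ι × κ) (ι × κ) ℂ) : Prop :=
  ∀ U : Matrix (ι × κ) (ι × κ) ℂ, U * Uᴴ = 1 → IsSep (U * ρ * Uᴴ)

/-- `Φ ⊗ Id` acting on matrices over a product index. -/
def tensorId {ι κ : Type*} [Fintype ι] [Fintype κ]
    (Φ : Matrix ι ι ℂ →ₗ[ℂ] Matrix ι ι ℂ)
    (X : Matrix (ι × κ) (ι × κ) ℂ) : Matrix (ι × κ) (ι × κ) ℂ :=
  Matrix.of fun p q => Φ (Matrix.of fun a b => X (a, p.2) (b, q.2)) p.1 q.1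

/-- Complete positivity via positivity of all identity extensions. -/
def IsCP {ι : Type*} [Fintype ι] (Φ : Matrix ι ι ℂ →ₗ[ℂ] Matrix ι ι ℂ) : Prop :=
  ∀ (k : ℕ) (X : Matrix (ι × Fin k) (ι × Fin k) ℂ), X.PosSemidef → (tensorId Φ X).PosSemidef


lemma real_smul_mat {ι : Type*} [Fintype ι] (r : ℝ) (M : Matrix ι ι ℂ) :
    (r : ℂ) • M = r • M := by
  ext a b; simp [Complex.real_smul]

lemma isSep_convex {ι κ : Type*} [Fintype ι] [Fintype κ] :
    Convex ℝ {ρ : Matrix (ι × κ) (ι × κ) ℂ | IsSep ρ} := by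
  rintro ρ ⟨k, p, A, B, hp, hp1, hA, hB, rfl⟩ σ ⟨l, q, C, D, hq, hq1, hC, hD, rfl⟩ a b ha hb hab
  refine ⟨k + l, Fin.append (fun i => a * p i) (fun j => b * q j), Fin.append A C, Fin.append B D,
    ?_, ?_, ?_, ?_, ?_⟩
  · intro i
    refine Fin.addCases (fun i => ?_) (fun i => ?_) i
    · rw [Fin.append_left]; exact mul_nonneg ha (hp i)
    · rw [Fin.append_right]; exact mul_nonneg hb (hq i)
  · rw [Fin.sum_univ_add]
    simp only [Fin.append_left, Fin.append_right, ← Finset.mul_sum, hp1, hq1, mul_one, hab]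
  · intro i
    refine Fin.addCases (fun i => ?_) (fun i => ?_) i
    · rw [Fin.append_left]; exact hA i
    · rw [Fin.append_right]; exact hC i
  · intro i
    refine Fin.addCases (fun i => ?_) (fun i => ?_) i
    · rw [Fin.append_left]; exact hB i
    · rw [Fin.append_right]; exact hD i
  · rw [Fin.sum_univ_add]
    simp only [Fin.append_left, Fin.append_right]
    rw [← real_smul_mat a, ← real_smul_mat b, Finset.smul_sum, Finset.smul_sum]
    congr 1 <;> (refine Finset.sum_congr rfl fun i _ => ?_; push_cast; rw [smul_smul])

lemma isSep_sum {ι κ γ : Type*} [Fintype ι] [Fintype κ] [Fintype γ]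
    (w : γ → ℝ) (σ : γ → Matrix (ι × κ) (ι × κ) ℂ)
    (hw : ∀ g, 0 ≤ w g) (hw1 : ∑ g, w g = 1) (hsep : ∀ g, IsSep (σ g)) :
    IsSep (∑ g, (w g : ℂ) • σ g) := by
  have := isSep_convex (ι := ι) (κ := κ) |>.sum_mem (t := Finset.univ)
    (fun g _ => hw g) hw1 (fun g _ => hsep g)
  simpa only [real_smul_mat, Set.mem_setOf_eq] using this

lemma cp_pos {ι : Type*} [Fintype ι] (Φ : Matrix ι ι ℂ →ₗ[ℂ] Matrix ι ι ℂ) (h : IsCP Φ) :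
    ∀ X : Matrix ι ι ℂ, X.PosSemidef → (Φ X).PosSemidef := by
  intro X hX
  have h1 : (X.submatrix (Prod.fst : ι × Fin 1 → ι) Prod.fst).PosSemidef := hX.submatrix _
  have h2 := h 1 _ h1
  have h3 := h2.submatrix (fun a : ι => ((a, 0) : ι × Fin 1))
  convert h3 using 2
  rfl


lemma psdDiagNonneg {d : Type*} [Fintype d] [DecidableEq d] {M : Matrix d d ℂ}
    (hM : M.PosSemidef) (a : d) : 0 ≤ M a a := by
  exact hM.diag_nonneg

lemma nonneg_eq_re (z : ℂ) (h : 0 ≤ z) : z = ((z.re : ℝ) : ℂ) := by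
  obtain ⟨hre, him⟩ := Complex.nonneg_iff.mp h
  exact (Complex.ext (by simp) (by simp [← him])).symm

lemma sumStd {d : Type*} [Fintype d] [DecidableEq d] :
    ∑ i : d, Matrix.single i i (1 : ℂ) = 1 := by
  ext a b
  simp [Matrix.sum_apply, Matrix.single, Matrix.one_apply, and_comm, ite_and, Finset.sum_ite_eq]

lemma traceStd {d : Type*} [Fintype d] [DecidableEq d] (i : d) :
    (Matrix.single i i (1 : ℂ)).trace = 1 := by
  simp [Matrix.trace, Matrix.diag, Matrix.single]

lemma psdStd {d : Type*} [Fintype d] [DecidableEq d] (i : d) :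
    (Matrix.single i i (1 : ℂ)).PosSemidef := by
  have : Matrix.single i i (1 : ℂ) = (Matrix.single i i (1 : ℂ))ᴴ * Matrix.single i i (1:ℂ) := by
    have h1 : (Matrix.single i i (1 : ℂ))ᴴ = Matrix.single i i (1:ℂ) := by
      ext a b; simp [conjTranspose_apply, Matrix.single, and_comm, apply_ite]
    rw [h1, single_mul_single_same, mul_one]
  rw [this]; exact posSemidef_conjTranspose_mul_self _

lemma diagSum {d : Type*} [Fintype d] [DecidableEq d] (f : d → ℝ) :
    Matrix.diagonal (fun i => (f i : ℂ)) = ∑ i : d, (f i : ℂ) • Matrix.single i i (1:ℂ) := by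
  ext a b
  simp [Matrix.sum_apply, Matrix.single, diagonal_apply, Matrix.one_apply, and_comm, ite_and,
    Finset.sum_ite_eq, mul_ite]

lemma cancel₁ {d : Type*} [Fintype d] [DecidableEq d] {A : Matrix d d ℂ} (h : A * Aᴴ = 1)
    (X : Matrix d d ℂ) : A * (Aᴴ * X) = X := by
  rw [← Matrix.mul_assoc, h, Matrix.one_mul]

lemma cancel₂ {d : Type*} [Fintype d] [DecidableEq d] {A : Matrix d d ℂ} (h : A * Aᴴ = 1)
    (X : Matrix d d ℂ) : Aᴴ * (A * X) = X := by
  rw [← Matrix.mul_assoc, mul_eq_one_comm.mp h, Matrix.one_mul]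

lemma permH {d : Type*} [Fintype d] [DecidableEq d] (π : Equiv.Perm d) :
    (π.permMatrix ℂ)ᴴ = (π⁻¹).permMatrix ℂ := by
  ext a b
  simp only [Equiv.Perm.permMatrix, PEquiv.toMatrix_apply, Equiv.toPEquiv_apply, conjTranspose_apply,
    Option.mem_def, Option.some.injEq]
  by_cases h : π b = a
  · subst h; simp
  · rw [if_neg h, if_neg (by rintro rfl; simp at h)]; simp

lemma permDiag {d : Type*} [Fintype d] [DecidableEq d] (π : Equiv.Perm d) (f : d → ℂ) :
    π.permMatrix ℂ * diagonal f * (π.permMatrix ℂ)ᴴ = diagonal (f ∘ π) := by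
  rw [permH, Equiv.Perm.permMatrix, Equiv.Perm.permMatrix, PEquiv.toMatrix_toPEquiv_mul,
    PEquiv.mul_toMatrix_toPEquiv]
  have hs : ∀ a : d, (Equiv.symm π⁻¹) a = π a := fun a => rfl
  ext a b
  by_cases h : a = b
  · subst h; simp [hs]
  · simp only [submatrix_apply, hs, id]
    rw [diagonal_apply_ne _ (fun hc => h (π.injective hc)), diagonal_apply_ne _ h]

lemma permUnit {d : Type*} [Fintype d] [DecidableEq d] (π : Equiv.Perm d) :
    π.permMatrix ℂ * (π.permMatrix ℂ)ᴴ = 1 := by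
  rw [permH, Equiv.Perm.permMatrix, Equiv.Perm.permMatrix, ← PEquiv.toMatrix_trans,
    ← Equiv.toPEquiv_trans]
  ext a b
  simp [Equiv.toPEquiv, PEquiv.toMatrix, Matrix.one_apply, eq_comm]

lemma mix {d : Type*} [Fintype d] [DecidableEq d]
    (Φ : Matrix d d ℂ →ₗ[ℂ] Matrix d d ℂ)
    (hpos : ∀ X : Matrix d d ℂ, X.PosSemidef → (Φ X).PosSemidef)
    (htr : ∀ X : Matrix d d ℂ, (Φ X).trace = X.trace)
    (hunit : Φ 1 = 1)
    (σ : Matrix d d ℂ) (hσ : σ.PosSemidef) :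
    ∃ (w : Equiv.Perm d → ℝ) (W : Equiv.Perm d → Matrix d d ℂ),
      (∀ π, 0 ≤ w π) ∧ (∑ π, w π = 1) ∧ (∀ π, W π * (W π)ᴴ = 1) ∧
      Φ σ = ∑ π, ((w π : ℝ) : ℂ) • (W π * σ * (W π)ᴴ) := by
  have hσh : σ.IsHermitian := hσ.1
  have hτ : (Φ σ).PosSemidef := hpos σ hσ
  have hτh : (Φ σ).IsHermitian := hτ.1
  set V : Matrix d d ℂ := (hσh.eigenvectorUnitary : Matrix d d ℂ) with hVdef
  set W0 : Matrix d d ℂ := (hτh.eigenvectorUnitary : Matrix d d ℂ) with hW0def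
  have hVU : V * Vᴴ = 1 := by
    rw [← Matrix.star_eq_conjTranspose]
    exact (Matrix.mem_unitaryGroup_iff).mp hσh.eigenvectorUnitary.2
  have hWU : W0 * W0ᴴ = 1 := by
    rw [← Matrix.star_eq_conjTranspose]
    exact (Matrix.mem_unitaryGroup_iff).mp hτh.eigenvectorUnitary.2
  set lam : d → ℝ := hσh.eigenvalues with hlam
  set mu : d → ℝ := hτh.eigenvalues with hmu
  have hspecσ : σ = V * diagonal (fun i => (lam i : ℂ)) * Vᴴ := by
    simpa [Function.comp_def, Matrix.star_eq_conjTranspose] using hσh.spectral_theorem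
  have hspecτ : Φ σ = W0 * diagonal (fun i => (mu i : ℂ)) * W0ᴴ := by
    simpa [Function.comp_def, Matrix.star_eq_conjTranspose] using hτh.spectral_theorem
  set E : d → Matrix d d ℂ := fun i => Matrix.single i i (1:ℂ) with hE
  set Q : d → Matrix d d ℂ := fun i => W0ᴴ * Φ (V * E i * Vᴴ) * W0 with hQ
  have hQpsd : ∀ i, (Q i).PosSemidef := fun i =>
    ((hpos _ (((psdStd i).mul_mul_conjTranspose_same V))).conjTranspose_mul_mul_same W0)
  -- D is doubly stochastic
  set D : Matrix d d ℝ := Matrix.of (fun j i => (Q i j j).re) with hD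
  have hQD : ∀ i j, Q i j j = ((D j i : ℝ) : ℂ) := fun i j =>
    nonneg_eq_re _ (psdDiagNonneg (hQpsd i) j)
  have hQsum : ∑ i, Q i = 1 := by
    have : ∑ i, V * E i * Vᴴ = 1 := by
      rw [← Finset.sum_mul, ← Finset.mul_sum, sumStd, Matrix.mul_one, hVU]
    rw [hQ]
    simp only [← Matrix.mul_assoc]
    rw [← Finset.sum_mul, ← Finset.mul_sum, ← map_sum, this, hunit, Matrix.mul_one,
      mul_eq_one_comm.mp hWU]
  have hrow : ∀ j, ∑ i, D j i = 1 := by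
    intro j
    have : ∑ i, Q i j j = 1 := by
      have := congrFun (congrFun hQsum j) j
      simpa [Matrix.sum_apply, Matrix.one_apply] using this
    rw [← Complex.ofReal_inj]
    push_cast
    simpa only [← hQD] using this
  have hcol : ∀ i, ∑ j, D j i = 1 := by
    intro i
    have htrQ : (Q i).trace = 1 := by
      rw [hQ]
      simp only []
      rw [Matrix.trace_mul_cycle, hWU, Matrix.one_mul, htr,
        Matrix.trace_mul_cycle, mul_eq_one_comm.mp hVU,
        Matrix.one_mul, traceStd]
    have : ∑ j, Q i j j = 1 := by
      simpa [Matrix.trace, Matrix.diag] using htrQ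
    rw [← Complex.ofReal_inj]
    push_cast
    simpa only [← hQD] using this
  have hDnn : ∀ j i, 0 ≤ D j i := by
    intro j i
    exact (Complex.nonneg_iff.mp (psdDiagNonneg (hQpsd i) j)).1
  have hDS : D ∈ doublyStochastic ℝ d :=
    mem_doublyStochastic_iff_sum.mpr ⟨hDnn, hrow, hcol⟩
  obtain ⟨w, hw0, hw1, hwD⟩ := exists_eq_sum_perm_of_mem_doublyStochastic hDS
  -- entrywise description of D
  have hDw : ∀ j i, D j i = ∑ π : Equiv.Perm d, w π * (if π j = i then 1 else 0) := by
    intro j i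
    have := congrFun (congrFun hwD j) i
    simp only [Matrix.sum_apply, Matrix.smul_apply, Equiv.Perm.permMatrix,
      PEquiv.toMatrix_apply, Equiv.toPEquiv_apply, Option.mem_def, Option.some.injEq,
      smul_eq_mul] at this
    rw [← this]
  -- the eigenvalue relation
  have hmuD : ∀ j, (mu j : ℂ) = ∑ i, ((D j i : ℝ) : ℂ) * (lam i : ℂ) := by
    intro j
    have hΦσ : W0ᴴ * Φ σ * W0 = ∑ i, (lam i : ℂ) • Q i := by
      have hσsum : σ = ∑ i, (lam i : ℂ) • (V * E i * Vᴴ) := by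
        rw [hspecσ, diagSum]
        rw [Finset.mul_sum, Finset.sum_mul]
        refine Finset.sum_congr rfl fun i _ => ?_
        rw [Matrix.mul_smul, Matrix.smul_mul]
      have h1 : Φ σ = ∑ i, (lam i : ℂ) • Φ (V * E i * Vᴴ) := by
        conv_lhs => rw [hσsum]
        rw [map_sum]
        exact Finset.sum_congr rfl fun i _ => by rw [_root_.map_smul]
      calc W0ᴴ * Φ σ * W0 = W0ᴴ * (∑ i, (lam i : ℂ) • Φ (V * E i * Vᴴ)) * W0 := by rw [h1]
        _ = ∑ i, (lam i : ℂ) • Q i := by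
            rw [Finset.mul_sum, Finset.sum_mul]
            exact Finset.sum_congr rfl fun i _ => by rw [Matrix.mul_smul, Matrix.smul_mul]
    have hdiagτ : W0ᴴ * Φ σ * W0 = diagonal (fun i => (mu i : ℂ)) := by
      rw [hspecτ]
      simp only [Matrix.mul_assoc]
      rw [cancel₂ hWU, mul_eq_one_comm.mp hWU, Matrix.mul_one]
    have := congrFun (congrFun (hdiagτ.symm.trans hΦσ) j) j
    simp only [diagonal_apply_eq, Matrix.sum_apply, Matrix.smul_apply, smul_eq_mul] at this
    rw [this]
    refine Finset.sum_congr rfl fun i _ => ?_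
    rw [hQD i j, mul_comm]
  -- conclude
  refine ⟨w, fun π => W0 * π.permMatrix ℂ * Vᴴ, hw0, hw1, ?_, ?_⟩
  · intro π
    simp only [conjTranspose_mul, conjTranspose_conjTranspose, Matrix.mul_assoc]
    rw [cancel₂ hVU, cancel₁ (permUnit π), hWU]
  · have hdmu : diagonal (fun i => (mu i : ℂ)) =
        ∑ π : Equiv.Perm d, ((w π : ℝ) : ℂ) •
          (π.permMatrix ℂ * diagonal (fun i => (lam i : ℂ)) * (π.permMatrix ℂ)ᴴ) := by
      have : ∀ π : Equiv.Perm d,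
          π.permMatrix ℂ * diagonal (fun i => (lam i : ℂ)) * (π.permMatrix ℂ)ᴴ
          = diagonal (fun i => (lam (π i) : ℂ)) := fun π => permDiag π _
      rw [Finset.sum_congr rfl fun π _ => by rw [this π]]
      ext a b
      by_cases h : a = b
      · subst h
        simp only [diagonal_apply_eq, Matrix.sum_apply, Matrix.smul_apply, smul_eq_mul]
        rw [hmuD a]
        calc ∑ i, ((D a i : ℝ) : ℂ) * (lam i : ℂ)
            = ∑ i, ∑ π : Equiv.Perm d, ((w π : ℝ):ℂ) * (if π a = i then (lam i : ℂ) else 0) := by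
              refine Finset.sum_congr rfl fun i _ => ?_
              rw [hDw a i]
              push_cast
              rw [Finset.sum_mul]
              refine Finset.sum_congr rfl fun π _ => ?_
              rw [mul_assoc]
              congr 1
              split <;> simp
          _ = ∑ π : Equiv.Perm d, ((w π : ℝ):ℂ) * (lam (π a) : ℂ) := by
              rw [Finset.sum_comm]
              refine Finset.sum_congr rfl fun π _ => ?_
              rw [← Finset.mul_sum]
              simp
      · simp [Matrix.sum_apply, diagonal_apply_ne _ h]
    rw [hspecτ, hdmu, Finset.mul_sum, Finset.sum_mul]
    refine Finset.sum_congr rfl fun π _ => ?_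
    rw [Matrix.mul_smul, Matrix.smul_mul]
    congr 1
    rw [hspecσ]
    simp only [conjTranspose_mul, conjTranspose_conjTranspose, Matrix.mul_assoc]
    rw [cancel₂ hVU, cancel₂ hVU]

theorem stmt2 (m n : ℕ) (hm : 2 ≤ m) (hn : 2 ≤ n)
    (Φ₁ Φ₂ : Matrix (Fin m × Fin n) (Fin m × Fin n) ℂ →ₗ[ℂ]
      Matrix (Fin m × Fin n) (Fin m × Fin n) ℂ)
    (h1pos : ∀ X, X.PosSemidef → (Φ₁ X).PosSemidef)
    (h1tr : ∀ X, (Φ₁ X).trace = X.trace)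
    (h1as : ∀ ρ, IsDM ρ → IsAbsSep (Φ₁ ρ))
    (h2cp : IsCP Φ₂)
    (h2tr : ∀ X, (Φ₂ X).trace = X.trace)
    (h2unital : Φ₂ 1 = 1) :
    ∀ ρ, IsDM ρ → IsAbsSep (Φ₂ (Φ₁ ρ)) := by
  intro ρ hρ U hU
  have hσ : (Φ₁ ρ).PosSemidef := h1pos ρ hρ.1
  have habs : IsAbsSep (Φ₁ ρ) := h1as ρ hρ
  have hΦ₂pos := cp_pos Φ₂ h2cp
  obtain ⟨w, W, hw0, hw1, hWU, hmixeq⟩ := mix Φ₂ hΦ₂pos h2tr h2unital (Φ₁ ρ) hσ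
  have hUW : ∀ π, (U * W π) * (U * W π)ᴴ = 1 := by
    intro π
    rw [conjTranspose_mul]
    simp only [Matrix.mul_assoc]
    rw [cancel₁ (hWU π), hU]
  have key : U * Φ₂ (Φ₁ ρ) * Uᴴ
      = ∑ π : Equiv.Perm (Fin m × Fin n),
          ((w π : ℝ) : ℂ) • ((U * W π) * Φ₁ ρ * (U * W π)ᴴ) := by
    rw [hmixeq, Finset.mul_sum, Finset.sum_mul]
    refine Finset.sum_congr rfl fun π _ => ?_
    rw [Matrix.mul_smul, Matrix.smul_mul]
    congr 1
    rw [conjTranspose_mul]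
    simp only [Matrix.mul_assoc]
  rw [key]
  exact isSep_sum w _ hw0 hw1 (fun π => habs (U * W π) (hUW π))

end
end

section
/- Let m₁, n₁, m₂, n₂ ≥ 2, and let Φ₁ and Φ₂ be positive trace-preserving maps on m₁n₁×m₁n₁ and m₂n₂×m₂n₂ complex matrices respectively. Identify ℂ^{m₁n₁} ⊗ ℂ^{m₂n₂} ≅ ℂ^{m₁} ⊗ ℂ^{n₁} ⊗ ℂ^{m₂} ⊗ ℂ^{n₂} ≅ (ℂ^{m₁} ⊗ ℂ^{m₂}) ⊗ (ℂ^{n₁} ⊗ ℂ^{n₂}) by the canonical permutation of tensor factors. If Φ₁ ⊗ Φ₂ is absolutely separating with respect to the bipartition m₁m₂ | n₁n₂ under this identification, then Φ₁ is absolutely separating with respect to m₁|n₁ and Φ₂ is absolutely separating with respect to m₂|n₂. -/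
open Matrix Kronecker BigOperators
open scoped ComplexOrder

noncomputable section

/-- The tensor product `Φ₁ ⊗ Φ₂` of linear maps, acting on matrices over a product index. -/
def tensorMap {ι κ : Type*} [Fintype ι] [Fintype κ] [DecidableEq ι]
    (Φ₁ : Matrix ι ι ℂ →ₗ[ℂ] Matrix ι ι ℂ) (Φ₂ : Matrix κ κ ℂ →ₗ[ℂ] Matrix κ κ ℂ)
    (X : Matrix (ι × κ) (ι × κ) ℂ) : Matrix (ι × κ) (ι × κ) ℂ :=
  Matrix.of fun p q => ∑ a, ∑ b,
    Φ₁ (Matrix.single a b 1) p.1 q.1 *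
      Φ₂ (Matrix.of fun c e => X (a, c) (b, e)) p.2 q.2

section Helpers

variable {α β γ δ : Type*} [Fintype α] [Fintype β] [Fintype γ] [Fintype δ]

lemma kron_conjTranspose (A : Matrix α α ℂ) (B : Matrix β β ℂ) :
    (A ⊗ₖ B)ᴴ = Aᴴ ⊗ₖ Bᴴ := by
  ext ⟨a, b⟩ ⟨c, d⟩
  simp [conjTranspose_apply, mul_comm]

lemma psd_kron {A : Matrix α α ℂ} {B : Matrix β β ℂ}
    (hA : A.PosSemidef) (hB : B.PosSemidef) : (A ⊗ₖ B).PosSemidef := by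
  exact hA.kronecker hB

/-- partial trace over the second factor -/
def ptr2 (M : Matrix (α × β) (α × β) ℂ) : Matrix α α ℂ :=
  Matrix.of fun a a' => ∑ b, M (a, b) (a', b)

lemma ptr2_isDM {M : Matrix (α × β) (α × β) ℂ} (hM : IsDM M) : IsDM (ptr2 M) := by
  classical
  obtain ⟨⟨hH, hP⟩, htr⟩ := hM
  refine ⟨posSemidef_iff_dotProduct_mulVec.mpr ⟨?_, ?_⟩, ?_⟩
  · ext a a'
    simp only [conjTranspose_apply, ptr2, of_apply, star_sum]
    refine Finset.sum_congr rfl fun b _ => ?_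
    have := congrFun (congrFun hH (a, b)) (a', b)
    simpa [conjTranspose_apply] using this
  · intro x
    have key : star x ⬝ᵥ ptr2 M *ᵥ x
        = ∑ b : β, star (fun p : α × β => if p.2 = b then x p.1 else 0) ⬝ᵥ
            M *ᵥ (fun p : α × β => if p.2 = b then x p.1 else 0) := by
      simp only [dotProduct, mulVec, ptr2, of_apply, Fintype.sum_prod_type, Pi.star_apply,
        apply_ite, star_zero, ite_mul, mul_ite, zero_mul, mul_zero,
        Finset.sum_ite_eq', Finset.mem_univ, if_true, Finset.sum_ite_eq]
      rw [Finset.sum_comm]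
      refine Finset.sum_congr rfl fun a _ => ?_
      simp only [Finset.sum_mul, Finset.mul_sum]
      rw [Finset.sum_comm]
    rw [key]
    exact Finset.sum_nonneg fun b _ => PosSemidef.dotProduct_mulVec_nonneg ⟨hH, hP⟩ _
  · rw [← htr]
    simp [trace, ptr2, diag, Fintype.sum_prod_type]

/-- partial trace over the first factor -/
def ptr1 (M : Matrix (α × β) (α × β) ℂ) : Matrix β β ℂ :=
  ptr2 (M.submatrix (Prod.swap) (Prod.swap))

lemma ptr1_isDM {M : Matrix (α × β) (α × β) ℂ} (hM : IsDM M) : IsDM (ptr1 M) := by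
  refine ptr2_isDM ⟨?_, ?_⟩
  · exact (posSemidef_submatrix_equiv (Equiv.prodComm β α)).mpr hM.1
  · rw [← hM.2]
    simp [trace, diag, Fintype.sum_prod_type, submatrix_apply]
    rw [Finset.sum_comm]


lemma isDM_single {ι : Type*} [Fintype ι] [DecidableEq ι] (a : ι) :
    IsDM (Matrix.single a a (1:ℂ)) := by
  constructor
  · have h : Matrix.single a a (1:ℂ) = Matrix.diagonal (Pi.single a 1) := by
      ext i j
      by_cases h1 : i = j
      · subst h1
        by_cases h2 : a = i <;> simp [Matrix.single, h2, Pi.single_apply, eq_comm]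
      · simp only [Matrix.single, Matrix.of_apply, Matrix.diagonal_apply_ne _ h1,
          ite_eq_right_iff, and_imp]
        intro hai haj; exact absurd (hai ▸ haj) h1
    rw [h]
    refine Matrix.PosSemidef.diagonal fun i => ?_
    by_cases h2 : i = a <;> simp [Pi.single_apply, h2, zero_le_one]
  · simp [Matrix.trace, Matrix.diag, Matrix.single]

lemma sum_rot {γ δ ε : Type*} [Fintype γ] [Fintype δ] [Fintype ε] (f : γ → δ → ε → ℂ) :
    ∑ c, ∑ d, ∑ i, f c d i = ∑ i, ∑ c, ∑ d, f c d i := by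
  rw [show (∑ c, ∑ d, ∑ i, f c d i) = ∑ c, ∑ i, ∑ d, f c d i from
    Finset.sum_congr rfl fun c _ => Finset.sum_comm, Finset.sum_comm]

lemma tensorMap_kron {ι κ : Type*} [Fintype ι] [Fintype κ] [DecidableEq ι]
    (Φ₁ : Matrix ι ι ℂ →ₗ[ℂ] Matrix ι ι ℂ) (Φ₂ : Matrix κ κ ℂ →ₗ[ℂ] Matrix κ κ ℂ)
    (X : Matrix ι ι ℂ) (Y : Matrix κ κ ℂ) :
    tensorMap Φ₁ Φ₂ (X ⊗ₖ Y) = Φ₁ X ⊗ₖ Φ₂ Y := by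
  funext p q
  have h1 : ∀ a b : ι, (Matrix.of fun c e => X a b * Y c e) = X a b • Y := by
    intro a b; ext c e; simp [smul_eq_mul]
  have h2 : Φ₁ X = ∑ a, ∑ b, X a b • Φ₁ (Matrix.single a b 1) := by
    conv_lhs => rw [Matrix.matrix_eq_sum_single X]
    rw [map_sum]
    refine Finset.sum_congr rfl fun a _ => ?_
    rw [map_sum]
    refine Finset.sum_congr rfl fun b _ => ?_
    rw [show Matrix.single a b (X a b) = X a b • Matrix.single a b (1:ℂ) by
      rw [Matrix.smul_single, smul_eq_mul, mul_one], _root_.map_smul]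
  simp only [tensorMap, Matrix.of_apply, Matrix.kroneckerMap_apply, h1, _root_.map_smul,
    Matrix.smul_apply, smul_eq_mul, h2, Matrix.sum_apply, Finset.sum_mul]
  exact Finset.sum_congr rfl fun a _ => Finset.sum_congr rfl fun b _ => by ring

lemma extract1 {α β γ δ : Type*} [Fintype α] [Fintype β] [Fintype γ] [Fintype δ]
    (X : Matrix (α × β) (α × β) ℂ) (Y : Matrix (γ × δ) (γ × δ) ℂ) (hY : Y.trace = 1)
    (hsep : IsSep ((Matrix.reindex (Equiv.prodProdProdComm α β γ δ)
      (Equiv.prodProdProdComm α β γ δ)) (X ⊗ₖ Y))) : IsSep X := by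
  obtain ⟨k, p, A, B, hp, hps, hA, hB, hEq⟩ := hsep
  refine ⟨k, p, fun i => ptr2 (A i), fun i => ptr2 (B i), hp, hps,
    fun i => ptr2_isDM (hA i), fun i => ptr2_isDM (hB i), ?_⟩
  funext x y
  obtain ⟨a, b⟩ := x
  obtain ⟨a', b'⟩ := y
  have hEntry : ∀ (c : γ) (d : δ), X (a,b) (a',b') * Y (c,d) (c,d)
      = ∑ i, (p i : ℂ) * (A i (a,c) (a',c) * B i (b,d) (b',d)) := by
    intro c d
    have h := congrFun (congrFun hEq ((a,c),(b,d))) ((a',c),(b',d))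
    simpa [Matrix.sum_apply, Matrix.smul_apply, smul_eq_mul] using h
  have htr : ∑ c : γ, ∑ d : δ, Y (c,d) (c,d) = 1 := by
    rw [← hY]; simp [Matrix.trace, Matrix.diag, Fintype.sum_prod_type]
  calc X (a,b) (a',b')
      = ∑ c : γ, ∑ d : δ, X (a,b) (a',b') * Y (c,d) (c,d) := by
        simp only [← Finset.mul_sum]; rw [htr, mul_one]
    _ = ∑ c : γ, ∑ d : δ, ∑ i, (p i : ℂ) * (A i (a,c) (a',c) * B i (b,d) (b',d)) :=
        Finset.sum_congr rfl fun c _ => Finset.sum_congr rfl fun d _ => hEntry c d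
    _ = (∑ i, (p i : ℂ) • (ptr2 (A i) ⊗ₖ ptr2 (B i))) (a,b) (a',b') := by
        rw [sum_rot]
        simp only [Matrix.sum_apply, Matrix.smul_apply, Matrix.kroneckerMap_apply,
          smul_eq_mul, ptr2, Matrix.of_apply]
        refine Finset.sum_congr rfl fun i _ => ?_
        rw [Finset.sum_mul_sum, Finset.mul_sum]
        refine Finset.sum_congr rfl fun c _ => ?_
        rw [Finset.mul_sum]

lemma extract2 {α β γ δ : Type*} [Fintype α] [Fintype β] [Fintype γ] [Fintype δ]
    (X : Matrix (α × β) (α × β) ℂ) (Y : Matrix (γ × δ) (γ × δ) ℂ) (hX : X.trace = 1)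
    (hsep : IsSep ((Matrix.reindex (Equiv.prodProdProdComm α β γ δ)
      (Equiv.prodProdProdComm α β γ δ)) (X ⊗ₖ Y))) : IsSep Y := by
  obtain ⟨k, p, A, B, hp, hps, hA, hB, hEq⟩ := hsep
  refine ⟨k, p, fun i => ptr1 (A i), fun i => ptr1 (B i), hp, hps,
    fun i => ptr1_isDM (hA i), fun i => ptr1_isDM (hB i), ?_⟩
  funext x y
  obtain ⟨c, d⟩ := x
  obtain ⟨c', d'⟩ := y
  have hEntry : ∀ (a : α) (b : β), X (a,b) (a,b) * Y (c,d) (c',d')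
      = ∑ i, (p i : ℂ) * (A i (a,c) (a,c') * B i (b,d) (b,d')) := by
    intro a b
    have h := congrFun (congrFun hEq ((a,c),(b,d))) ((a,c'),(b,d'))
    simpa [Matrix.sum_apply, Matrix.smul_apply, smul_eq_mul] using h
  have htr : ∑ a : α, ∑ b : β, X (a,b) (a,b) = 1 := by
    rw [← hX]; simp [Matrix.trace, Matrix.diag, Fintype.sum_prod_type]
  calc Y (c,d) (c',d')
      = ∑ a : α, ∑ b : β, X (a,b) (a,b) * Y (c,d) (c',d') := by
        simp only [← Finset.sum_mul]; rw [htr, one_mul]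
    _ = ∑ a : α, ∑ b : β, ∑ i, (p i : ℂ) * (A i (a,c) (a,c') * B i (b,d) (b,d')) :=
        Finset.sum_congr rfl fun a _ => Finset.sum_congr rfl fun b _ => hEntry a b
    _ = (∑ i, (p i : ℂ) • (ptr1 (A i) ⊗ₖ ptr1 (B i))) (c,d) (c',d') := by
        rw [sum_rot]
        simp only [Matrix.sum_apply, Matrix.smul_apply, Matrix.kroneckerMap_apply,
          smul_eq_mul, ptr1, ptr2, Matrix.of_apply, Matrix.submatrix_apply, Prod.swap_prod_mk]
        refine Finset.sum_congr rfl fun i _ => ?_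
        rw [Finset.sum_mul_sum, Finset.mul_sum]
        refine Finset.sum_congr rfl fun a _ => ?_
        rw [Finset.mul_sum]

end Helpers

theorem stmt4 (m₁ n₁ m₂ n₂ : ℕ) (hm₁ : 2 ≤ m₁) (hn₁ : 2 ≤ n₁) (hm₂ : 2 ≤ m₂) (hn₂ : 2 ≤ n₂)
    (Φ₁ : Matrix (Fin m₁ × Fin n₁) (Fin m₁ × Fin n₁) ℂ →ₗ[ℂ]
      Matrix (Fin m₁ × Fin n₁) (Fin m₁ × Fin n₁) ℂ)
    (Φ₂ : Matrix (Fin m₂ × Fin n₂) (Fin m₂ × Fin n₂) ℂ →ₗ[ℂ]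
      Matrix (Fin m₂ × Fin n₂) (Fin m₂ × Fin n₂) ℂ)
    (h1pos : ∀ X, X.PosSemidef → (Φ₁ X).PosSemidef)
    (h1tr : ∀ X, (Φ₁ X).trace = X.trace)
    (h2pos : ∀ X, X.PosSemidef → (Φ₂ X).PosSemidef)
    (h2tr : ∀ X, (Φ₂ X).trace = X.trace)
    (hAS : ∀ ρ : Matrix ((Fin m₁ × Fin n₁) × (Fin m₂ × Fin n₂))
        ((Fin m₁ × Fin n₁) × (Fin m₂ × Fin n₂)) ℂ, IsDM ρ →
      IsAbsSep (Matrix.reindex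
        (Equiv.prodProdProdComm (Fin m₁) (Fin n₁) (Fin m₂) (Fin n₂))
        (Equiv.prodProdProdComm (Fin m₁) (Fin n₁) (Fin m₂) (Fin n₂))
        (tensorMap Φ₁ Φ₂ ρ))) :
    (∀ ρ₁, IsDM ρ₁ → IsAbsSep (Φ₁ ρ₁)) ∧ (∀ ρ₂, IsDM ρ₂ → IsAbsSep (Φ₂ ρ₂)) := by
  have hm2 : (0:ℕ) < m₂ := by omega
  have hn2 : (0:ℕ) < n₂ := by omega
  have hm1 : (0:ℕ) < m₁ := by omega
  have hn1 : (0:ℕ) < n₁ := by omega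
  set e := Equiv.prodProdProdComm (Fin m₁) (Fin n₁) (Fin m₂) (Fin n₂) with he
  constructor
  · intro ρ₁ hρ₁ U hU
    set σ : Matrix (Fin m₂ × Fin n₂) (Fin m₂ × Fin n₂) ℂ :=
      Matrix.single (⟨0, hm2⟩, ⟨0, hn2⟩) (⟨0, hm2⟩, ⟨0, hn2⟩) 1 with hσdef
    have hσ : IsDM σ := isDM_single _
    have hρ : IsDM (ρ₁ ⊗ₖ σ) :=
      ⟨psd_kron hρ₁.1 hσ.1, by rw [Matrix.trace_kronecker, hρ₁.2, hσ.2, mul_one]⟩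
    have hAS' := hAS _ hρ
    rw [tensorMap_kron] at hAS'
    set W : Matrix ((Fin m₁ × Fin m₂) × (Fin n₁ × Fin n₂))
        ((Fin m₁ × Fin m₂) × (Fin n₁ × Fin n₂)) ℂ :=
      (Matrix.reindex e e) (U ⊗ₖ (1 : Matrix (Fin m₂ × Fin n₂) (Fin m₂ × Fin n₂) ℂ))
      with hWdef
    have hW : W * Wᴴ = 1 := by
      rw [hWdef, Matrix.conjTranspose_reindex, kron_conjTranspose, Matrix.conjTranspose_one]
      simp only [Matrix.reindex_apply, Matrix.submatrix_mul_equiv]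
      rw [← Matrix.mul_kronecker_mul, hU, Matrix.one_mul, Matrix.one_kronecker_one]
      exact Matrix.submatrix_one_equiv e.symm
    have hsep := hAS' W hW
    have hEqM : W * (Matrix.reindex e e) (Φ₁ ρ₁ ⊗ₖ Φ₂ σ) * Wᴴ
        = (Matrix.reindex e e) ((U * Φ₁ ρ₁ * Uᴴ) ⊗ₖ Φ₂ σ) := by
      rw [hWdef, Matrix.conjTranspose_reindex, kron_conjTranspose, Matrix.conjTranspose_one]
      simp only [Matrix.reindex_apply, Matrix.submatrix_mul_equiv]
      congr 1
      rw [← Matrix.mul_kronecker_mul, ← Matrix.mul_kronecker_mul, Matrix.one_mul,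
        Matrix.mul_one]
    rw [hEqM] at hsep
    exact extract1 _ _ (by rw [h2tr, hσ.2]) hsep
  · intro ρ₂ hρ₂ U hU
    set σ : Matrix (Fin m₁ × Fin n₁) (Fin m₁ × Fin n₁) ℂ :=
      Matrix.single (⟨0, hm1⟩, ⟨0, hn1⟩) (⟨0, hm1⟩, ⟨0, hn1⟩) 1 with hσdef
    have hσ : IsDM σ := isDM_single _
    have hρ : IsDM (σ ⊗ₖ ρ₂) :=
      ⟨psd_kron hσ.1 hρ₂.1, by rw [Matrix.trace_kronecker, hρ₂.2, hσ.2, mul_one]⟩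
    have hAS' := hAS _ hρ
    rw [tensorMap_kron] at hAS'
    set W : Matrix ((Fin m₁ × Fin m₂) × (Fin n₁ × Fin n₂))
        ((Fin m₁ × Fin m₂) × (Fin n₁ × Fin n₂)) ℂ :=
      (Matrix.reindex e e) ((1 : Matrix (Fin m₁ × Fin n₁) (Fin m₁ × Fin n₁) ℂ) ⊗ₖ U)
      with hWdef
    have hW : W * Wᴴ = 1 := by
      rw [hWdef, Matrix.conjTranspose_reindex, kron_conjTranspose, Matrix.conjTranspose_one]
      simp only [Matrix.reindex_apply, Matrix.submatrix_mul_equiv]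
      rw [← Matrix.mul_kronecker_mul, hU, Matrix.one_mul, Matrix.one_kronecker_one]
      exact Matrix.submatrix_one_equiv e.symm
    have hsep := hAS' W hW
    have hEqM : W * (Matrix.reindex e e) (Φ₁ σ ⊗ₖ Φ₂ ρ₂) * Wᴴ
        = (Matrix.reindex e e) (Φ₁ σ ⊗ₖ (U * Φ₂ ρ₂ * Uᴴ)) := by
      rw [hWdef, Matrix.conjTranspose_reindex, kron_conjTranspose, Matrix.conjTranspose_one]
      simp only [Matrix.reindex_apply, Matrix.submatrix_mul_equiv]
      congr 1
      rw [← Matrix.mul_kronecker_mul, ← Matrix.mul_kronecker_mul, Matrix.one_mul,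
        Matrix.mul_one]
    rw [hEqM] at hsep
    exact extract2 _ _ (by rw [h1tr, hσ.2]) hsep

end
end

section
/- Let m, n ≥ 2, and let Φ₁ and Φ₂ be positive trace-preserving maps on m×m and n×n complex matrices, respectively. If there exists a density matrix ρ₁ on ℂ^m such that Φ₁[ρ₁] has a zero eigenvalue (i.e., Φ₁[ρ₁] is singular), or there exists a density matrix ρ₂ on ℂ^n such that Φ₂[ρ₂] is singular, then the local map Φ₁ ⊗ Φ₂ on mn×mn matrices is not absolutely separating with respect to the bipartition m|n. -/
open Matrix Kronecker BigOperators
open scoped ComplexOrder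

noncomputable section


namespace Stmt7Aux

variable {ι κ : Type*} [Fintype ι] [Fintype κ] [DecidableEq ι] [DecidableEq κ]

lemma kron_conjTranspose (A : Matrix ι ι ℂ) (B : Matrix κ κ ℂ) :
    (A ⊗ₖ B)ᴴ = Aᴴ ⊗ₖ Bᴴ := by
  ext ⟨i, j⟩ ⟨k, l⟩
  simp [conjTranspose_apply, kroneckerMap_apply, mul_comm]

lemma psd_kron {A : Matrix ι ι ℂ} {B : Matrix κ κ ℂ}
    (hA : A.PosSemidef) (hB : B.PosSemidef) : (A ⊗ₖ B).PosSemidef := by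
  exact hA.kronecker hB

/-- Partial transpose on the second factor. -/
def PT (X : Matrix (ι × κ) (ι × κ) ℂ) : Matrix (ι × κ) (ι × κ) ℂ :=
  Matrix.of fun p q => X (p.1, q.2) (q.1, p.2)

lemma PT_kron (A : Matrix ι ι ℂ) (B : Matrix κ κ ℂ) :
    PT (A ⊗ₖ B) = A ⊗ₖ Bᵀ := by
  ext ⟨i, j⟩ ⟨k, l⟩
  simp [PT, kroneckerMap_apply, transpose_apply]

lemma dot_sum {k : ℕ} (f : Fin k → (ι × κ) → ℂ) (w : ι × κ → ℂ) :
    w ⬝ᵥ (∑ i, f i) = ∑ i, w ⬝ᵥ f i := by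
  simp only [dotProduct, Finset.sum_apply, Finset.mul_sum]
  exact Finset.sum_comm

lemma sum_mulVec {k : ℕ} (f : Fin k → Matrix (ι × κ) (ι × κ) ℂ) (w : ι × κ → ℂ) :
    (∑ i, f i) *ᵥ w = ∑ i, (f i) *ᵥ w := by
  ext j
  simp only [mulVec, dotProduct, Finset.sum_apply, Matrix.sum_apply, Finset.sum_mul]
  exact Finset.sum_comm

/-- Separable states have PSD partial transpose (as a quadratic form bound). -/
lemma sep_PT_form_nonneg {ρ : Matrix (ι × κ) (ι × κ) ℂ} (h : IsSep ρ) (w : ι × κ → ℂ) :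
    0 ≤ star w ⬝ᵥ (PT ρ *ᵥ w) := by
  obtain ⟨k, p, A, B, hp, -, hA, hB, rfl⟩ := h
  have hPT : PT (∑ i, (p i : ℂ) • (A i ⊗ₖ B i)) = ∑ i, (p i : ℂ) • (A i ⊗ₖ (B i)ᵀ) := by
    ext ⟨a, b⟩ ⟨c, d⟩
    simp [PT, Matrix.sum_apply, kroneckerMap_apply, transpose_apply]
  rw [hPT]
  have expand : (∑ i, (p i : ℂ) • (A i ⊗ₖ (B i)ᵀ)) *ᵥ w
      = ∑ i, (p i : ℂ) • ((A i ⊗ₖ (B i)ᵀ) *ᵥ w) := by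
    rw [sum_mulVec]
    congr 1; ext i
    rw [Matrix.smul_mulVec]
  rw [expand, dot_sum]
  apply Finset.sum_nonneg
  intro i _
  have hpsd : ((A i) ⊗ₖ (B i)ᵀ).PosSemidef := psd_kron (hA i).1 (hB i).1.transpose
  have h1 : (0 : ℂ) ≤ (p i : ℂ) := by
    rw [Complex.le_def]; simp [hp i]
  have h2 := hpsd.dotProduct_mulVec_nonneg w
  calc (0:ℂ) ≤ (p i : ℂ) * (star w ⬝ᵥ ((A i ⊗ₖ (B i)ᵀ) *ᵥ w)) := mul_nonneg h1 h2
    _ = star w ⬝ᵥ ((p i : ℂ) • ((A i ⊗ₖ (B i)ᵀ) *ᵥ w)) := by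
        rw [dotProduct_smul]; simp [smul_eq_mul]

lemma sum_pair {q0 q1 : ι} (h : q0 ≠ q1) (x y : ℂ) :
    ∑ b, (if b = q0 then x else if b = q1 then y else 0) = x + y := by
  have key : ∀ b : ι, (if b = q0 then x else if b = q1 then y else 0)
      = (if b = q0 then x else 0) + (if b = q1 then y else 0) := by
    intro b
    split_ifs with h1 h2 <;> simp_all
  rw [Finset.sum_congr rfl (fun b _ => key b), Finset.sum_add_distrib]
  simp

/-- permutation matrix -/
def permM (π : Equiv.Perm ι) : Matrix ι ι ℂ :=
  Matrix.of fun a b => if b = π.symm a then 1 else 0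

lemma permM_unitary (π : Equiv.Perm ι) : permM π * (permM π)ᴴ = 1 := by
  ext a c
  simp only [mul_apply, conjTranspose_apply, permM, Matrix.of_apply, one_apply]
  have key : ∀ b : ι, (if b = π.symm a then (1:ℂ) else 0) * star (if b = π.symm c then (1:ℂ) else 0)
      = if b = π.symm a then (if π.symm a = π.symm c then 1 else 0) else 0 := by
    intro b
    split_ifs with h1 h2 h3 <;> simp_all
  rw [Finset.sum_congr rfl (fun b _ => key b), Finset.sum_ite_eq']
  simp [EmbeddingLike.apply_eq_iff_eq]

lemma permM_diag (π : Equiv.Perm ι) (d : ι → ℂ) :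
    permM π * diagonal d * (permM π)ᴴ = diagonal (fun a => d (π.symm a)) := by
  ext a c
  rw [Matrix.mul_apply]
  simp only [Matrix.mul_diagonal, conjTranspose_apply, permM, Matrix.of_apply]
  have key : ∀ b : ι, (if b = π.symm a then (1:ℂ) else 0) * d b * star (if b = π.symm c then (1:ℂ) else 0)
      = if b = π.symm a then (if π.symm a = π.symm c then d (π.symm a) else 0) else 0 := by
    intro b
    split_ifs with h1 h2 h3 <;> simp_all
  rw [Finset.sum_congr rfl (fun b _ => key b), Finset.sum_ite_eq']
  simp [diagonal_apply, EmbeddingLike.apply_eq_iff_eq]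

lemma exists_perm3 {a1 a2 a3 b1 b2 b3 : ι}
    (ha12 : a1 ≠ a2) (ha13 : a1 ≠ a3) (ha23 : a2 ≠ a3)
    (hb12 : b1 ≠ b2) (hb13 : b1 ≠ b3) (hb23 : b2 ≠ b3) :
    ∃ π : Equiv.Perm ι, π a1 = b1 ∧ π a2 = b2 ∧ π a3 = b3 := by
  classical
  set π1 := Equiv.swap a1 b1 with hπ1
  have h1 : π1 a1 = b1 := Equiv.swap_apply_left _ _
  set a2' := π1 a2 with ha2'
  set a3' := π1 a3 with ha3'
  have ha2'b1 : a2' ≠ b1 := fun h => ha12 (π1.injective (h1.trans h.symm))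
  have ha3'b1 : a3' ≠ b1 := fun h => ha13 (π1.injective (h1.trans h.symm))
  have ha23' : a2' ≠ a3' := fun h => ha23 (π1.injective h)
  set π2 := Equiv.swap a2' b2 with hπ2
  have h2 : π2 a2' = b2 := Equiv.swap_apply_left _ _
  have h2b1 : π2 b1 = b1 := Equiv.swap_apply_of_ne_of_ne (Ne.symm ha2'b1) hb12
  set a3'' := π2 a3' with ha3''
  have ha3''b1 : a3'' ≠ b1 := fun h => ha3'b1 (π2.injective (h.trans h2b1.symm))
  have ha3''b2 : a3'' ≠ b2 := fun h => ha23' (π2.injective (h2.trans h.symm))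
  set π3 := Equiv.swap a3'' b3 with hπ3
  have h3 : π3 a3'' = b3 := Equiv.swap_apply_left _ _
  have h3b1 : π3 b1 = b1 := Equiv.swap_apply_of_ne_of_ne (Ne.symm ha3''b1) hb13
  have h3b2 : π3 b2 = b2 := Equiv.swap_apply_of_ne_of_ne (Ne.symm ha3''b2) hb23
  refine ⟨(π1.trans π2).trans π3, ?_, ?_, ?_⟩
  · simp only [Equiv.trans_apply, h1, h2b1, h3b1]
  · simp only [Equiv.trans_apply, ← ha2', h2, h3b2]
  · simp only [Equiv.trans_apply, ← ha3', ← ha3'', h3]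

/-- The entry `1/√2` as a complex number. -/
def rc : ℂ := ((Real.sqrt 2)⁻¹ : ℝ)

lemma star_rc : star rc = rc := by simp [rc, Complex.conj_ofReal]

lemma rc_mul_rc : rc * rc = (1/2 : ℂ) := by
  have h : (Real.sqrt 2)⁻¹ * (Real.sqrt 2)⁻¹ = 1/2 := by
    rw [← mul_inv, Real.mul_self_sqrt (by norm_num : (0:ℝ) ≤ 2)]
    norm_num
  rw [rc, ← Complex.ofReal_mul, h]
  norm_num

/-- The "Bell rotation" unitary supported on coordinates `q0, q1`. -/
def Vm (q0 q1 : ι) : Matrix ι ι ℂ :=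
  Matrix.of fun a b =>
    if b = q0 then (if a = q0 then rc else if a = q1 then rc else 0)
    else if b = q1 then (if a = q0 then rc else if a = q1 then -rc else 0)
    else if a = b then 1 else 0

section VmLemmas

variable {q0 q1 : ι} (h01 : q0 ≠ q1)

lemma Vm_row0 (b : ι) : Vm q0 q1 q0 b = if b = q0 then rc else if b = q1 then rc else 0 := by
  simp only [Vm, Matrix.of_apply]
  split_ifs with h1 h2 h3 <;> simp_all

lemma Vm_row1 (b : ι) : Vm q0 q1 q1 b = if b = q0 then rc else if b = q1 then -rc else 0 := by
  simp only [Vm, Matrix.of_apply]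
  split_ifs with h1 h2 h3 <;> simp_all

lemma Vm_row_out {a : ι} (ha0 : a ≠ q0) (ha1 : a ≠ q1) (b : ι) :
    Vm q0 q1 a b = if b = a then 1 else 0 := by
  simp only [Vm, Matrix.of_apply]
  rcases eq_or_ne b q0 with rfl | hb0
  · simp [ha0, ha1, Ne.symm ha0]
  · rcases eq_or_ne b q1 with rfl | hb1
    · simp [hb0, ha0, ha1, Ne.symm ha1]
    · rcases eq_or_ne a b with rfl | hab
      · simp [hb0, hb1]
      · simp [hb0, hb1, hab, Ne.symm hab]

include h01 in
lemma Vm_unitary : Vm q0 q1 * (Vm q0 q1)ᴴ = 1 := by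
  ext a c
  rw [mul_apply, one_apply]
  simp only [conjTranspose_apply]
  by_cases ha0 : a = q0 <;> by_cases ha1 : a = q1 <;>
    by_cases hc0 : c = q0 <;> by_cases hc1 : c = q1
  all_goals first
  | (exact absurd (ha0.symm.trans ha1) h01)
  | (exact absurd (hc0.symm.trans hc1) h01)
  | skip
  · -- a = q0, c = q0
    rw [ha0, hc0]
    have key : ∀ b, Vm q0 q1 q0 b * star (Vm q0 q1 q0 b)
        = if b = q0 then rc * rc else if b = q1 then rc * rc else 0 := by
      intro b; rw [Vm_row0]; split_ifs <;> simp [star_rc]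
    rw [Finset.sum_congr rfl fun b _ => key b, sum_pair h01, rc_mul_rc]
    norm_num
  · -- a = q0, c = q1
    rw [ha0, hc1]
    have key : ∀ b, Vm q0 q1 q0 b * star (Vm q0 q1 q1 b)
        = if b = q0 then rc * rc else if b = q1 then -(rc * rc) else 0 := by
      intro b; rw [Vm_row0, Vm_row1]; split_ifs <;> simp [star_rc]
    rw [Finset.sum_congr rfl fun b _ => key b, sum_pair h01]
    simp [h01]
  · -- a = q0, c out
    rw [ha0]
    have key : ∀ b, Vm q0 q1 q0 b * star (Vm q0 q1 c b)
        = if b = q0 then 0 else if b = q1 then 0 else 0 := by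
      intro b; rw [Vm_row0, Vm_row_out hc0 hc1]
      split_ifs <;> simp_all
    rw [Finset.sum_congr rfl fun b _ => key b, sum_pair h01]
    simp [Ne.symm hc0]
  · -- a = q1, c = q0
    rw [ha1, hc0]
    have key : ∀ b, Vm q0 q1 q1 b * star (Vm q0 q1 q0 b)
        = if b = q0 then rc * rc else if b = q1 then -(rc * rc) else 0 := by
      intro b; rw [Vm_row0, Vm_row1]; split_ifs <;> simp [star_rc]
    rw [Finset.sum_congr rfl fun b _ => key b, sum_pair h01]
    simp [Ne.symm h01]
  · -- a = q1, c = q1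
    rw [ha1, hc1]
    have key : ∀ b, Vm q0 q1 q1 b * star (Vm q0 q1 q1 b)
        = if b = q0 then rc * rc else if b = q1 then rc * rc else 0 := by
      intro b; rw [Vm_row1]; split_ifs <;> simp [star_rc]
    rw [Finset.sum_congr rfl fun b _ => key b, sum_pair h01, rc_mul_rc]
    norm_num
  · -- a = q1, c out
    rw [ha1]
    have key : ∀ b, Vm q0 q1 q1 b * star (Vm q0 q1 c b)
        = if b = q0 then 0 else if b = q1 then 0 else 0 := by
      intro b; rw [Vm_row1, Vm_row_out hc0 hc1]
      split_ifs <;> simp_all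
    rw [Finset.sum_congr rfl fun b _ => key b, sum_pair h01]
    simp [Ne.symm hc1]
  · -- a out, c = q0
    rw [hc0]
    have key : ∀ b, Vm q0 q1 a b * star (Vm q0 q1 q0 b)
        = if b = q0 then 0 else if b = q1 then 0 else 0 := by
      intro b; rw [Vm_row0, Vm_row_out ha0 ha1]
      split_ifs <;> simp_all
    rw [Finset.sum_congr rfl fun b _ => key b, sum_pair h01]
    simp [ha0]
  · -- a out, c = q1
    rw [hc1]
    have key : ∀ b, Vm q0 q1 a b * star (Vm q0 q1 q1 b)
        = if b = q0 then 0 else if b = q1 then 0 else 0 := by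
      intro b; rw [Vm_row1, Vm_row_out ha0 ha1]
      split_ifs <;> simp_all
    rw [Finset.sum_congr rfl fun b _ => key b, sum_pair h01]
    simp [ha1]
  · -- a out, c out
    have key : ∀ b, Vm q0 q1 a b * star (Vm q0 q1 c b)
        = if b = a then (if a = c then 1 else 0) else 0 := by
      intro b; rw [Vm_row_out ha0 ha1, Vm_row_out hc0 hc1]
      split_ifs <;> simp_all
    rw [Finset.sum_congr rfl fun b _ => key b, Finset.sum_ite_eq']
    simp

lemma VDV_entry (d : ι → ℂ) (a c : ι) :
    (Vm q0 q1 * diagonal d * (Vm q0 q1)ᴴ) a c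
      = ∑ b, Vm q0 q1 a b * d b * star (Vm q0 q1 c b) := by
  rw [Matrix.mul_apply]
  exact Finset.sum_congr rfl fun b _ => by rw [Matrix.mul_diagonal, conjTranspose_apply]

include h01 in
lemma VDV_out {a : ι} (ha0 : a ≠ q0) (ha1 : a ≠ q1) (d : ι → ℂ) :
    (Vm q0 q1 * diagonal d * (Vm q0 q1)ᴴ) a a = d a := by
  rw [VDV_entry]
  have key : ∀ b, Vm q0 q1 a b * d b * star (Vm q0 q1 a b)
      = if b = a then d a else 0 := by
    intro b; rw [Vm_row_out ha0 ha1]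
    split_ifs with h1 <;> simp_all
  rw [Finset.sum_congr rfl fun b _ => key b, Finset.sum_ite_eq']
  simp

include h01 in
lemma VDV_01 (d : ι → ℂ) :
    (Vm q0 q1 * diagonal d * (Vm q0 q1)ᴴ) q0 q1 = (d q0 - d q1) / 2 := by
  rw [VDV_entry]
  have key : ∀ b, Vm q0 q1 q0 b * d b * star (Vm q0 q1 q1 b)
      = if b = q0 then rc * rc * d q0 else if b = q1 then -(rc * rc * d q1) else 0 := by
    intro b; rw [Vm_row0, Vm_row1]
    split_ifs with h1 h2 <;> subst_vars <;> simp [star_rc] <;> ring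
  rw [Finset.sum_congr rfl fun b _ => key b, sum_pair h01, rc_mul_rc]
  ring

include h01 in
lemma VDV_10 (d : ι → ℂ) :
    (Vm q0 q1 * diagonal d * (Vm q0 q1)ᴴ) q1 q0 = (d q0 - d q1) / 2 := by
  rw [VDV_entry]
  have key : ∀ b, Vm q0 q1 q1 b * d b * star (Vm q0 q1 q0 b)
      = if b = q0 then rc * rc * d q0 else if b = q1 then -(rc * rc * d q1) else 0 := by
    intro b; rw [Vm_row0, Vm_row1]
    split_ifs with h1 h2 <;> subst_vars <;> simp [star_rc] <;> ring
  rw [Finset.sum_congr rfl fun b _ => key b, sum_pair h01, rc_mul_rc]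
  ring

end VmLemmas


lemma kron_mulVec (A : Matrix ι ι ℂ) (B : Matrix κ κ ℂ) (x : ι → ℂ) (y : κ → ℂ) :
    (A ⊗ₖ B) *ᵥ (fun p => x p.1 * y p.2) = fun p => (A *ᵥ x) p.1 * (B *ᵥ y) p.2 := by
  funext ⟨i, j⟩
  simp only [mulVec, dotProduct, Fintype.sum_prod_type, kroneckerMap_apply]
  rw [Finset.sum_mul_sum]
  exact Finset.sum_congr rfl fun k _ => Finset.sum_congr rfl fun l _ => by ring

lemma indep_left {x : ι → ℂ} (hx : x ≠ 0) {c c' : κ} (hcc : c ≠ c') :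
    LinearIndependent ℂ ![(fun p : ι × κ => x p.1 * (if p.2 = c then 1 else 0)),
                          (fun p : ι × κ => x p.1 * (if p.2 = c' then 1 else 0))] := by
  obtain ⟨i0, hi0⟩ := Function.ne_iff.mp hx
  have hi0' : x i0 ≠ 0 := by simpa using hi0
  rw [linearIndependent_fin2]
  refine ⟨?_, ?_⟩
  · intro h
    have h2 := congrFun h (i0, c')
    simp only [Matrix.cons_val_one, Matrix.head_cons, Pi.zero_apply] at h2
    simp at h2
    first
    | exact hi0' h2
    | exact hi0' h2.symm
  · intro a h
    have h2 := congrFun h (i0, c)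
    simp only [Matrix.cons_val_one, Matrix.head_cons, Matrix.cons_val_zero, Pi.smul_apply,
      smul_eq_mul] at h2
    simp [hcc] at h2
    first
    | exact hi0' h2
    | exact hi0' h2.symm
    | simp_all

lemma indep_right {x : κ → ℂ} (hx : x ≠ 0) {c c' : ι} (hcc : c ≠ c') :
    LinearIndependent ℂ ![(fun p : ι × κ => (if p.1 = c then 1 else 0) * x p.2),
                          (fun p : ι × κ => (if p.1 = c' then 1 else 0) * x p.2)] := by
  obtain ⟨j0, hj0⟩ := Function.ne_iff.mp hx
  have hj0' : x j0 ≠ 0 := by simpa using hj0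
  rw [linearIndependent_fin2]
  refine ⟨?_, ?_⟩
  · intro h
    have h2 := congrFun h (c', j0)
    simp only [Matrix.cons_val_one, Matrix.head_cons, Pi.zero_apply] at h2
    simp at h2
    first
    | exact hj0' h2
    | exact hj0' h2.symm
  · intro a h
    have h2 := congrFun h (c, j0)
    simp only [Matrix.cons_val_one, Matrix.head_cons, Matrix.cons_val_zero, Pi.smul_apply,
      smul_eq_mul] at h2
    simp [hcc] at h2
    first
    | exact hj0' h2
    | exact hj0' h2.symm
    | simp_all

lemma two_zero_eigs {σ : Matrix (ι × κ) (ι × κ) ℂ} (hH : σ.IsHermitian)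
    {u v : ι × κ → ℂ} (hu : σ *ᵥ u = 0) (hv : σ *ᵥ v = 0)
    (hind : LinearIndependent ℂ ![u, v]) :
    ∃ i j, i ≠ j ∧ hH.eigenvalues i = 0 ∧ hH.eigenvalues j = 0 := by
  classical
  have hker2 : 2 ≤ Module.finrank ℂ (LinearMap.ker σ.mulVecLin) := by
    have hmem : ∀ t : Fin 2, ![u, v] t ∈ LinearMap.ker σ.mulVecLin := by
      intro t
      fin_cases t <;>
        simp [LinearMap.mem_ker, Matrix.mulVecLin_apply, hu, hv]
    set w : Fin 2 → LinearMap.ker σ.mulVecLin := fun t => ⟨![u, v] t, hmem t⟩ with hw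
    have hcomp : (LinearMap.ker σ.mulVecLin).subtype ∘ w = ![u, v] := rfl
    have hindw : LinearIndependent ℂ w := by
      apply LinearIndependent.of_comp (LinearMap.ker σ.mulVecLin).subtype
      rw [hcomp]; exact hind
    simpa using hindw.fintype_card_le_finrank
  have hrn := LinearMap.finrank_range_add_finrank_ker σ.mulVecLin
  rw [Module.finrank_pi] at hrn
  have hrdef : σ.rank = Module.finrank ℂ (LinearMap.range σ.mulVecLin) := rfl
  have h1 := hH.rank_eq_card_non_zero_eigs
  have h2 : Fintype.card {i // ¬ hH.eigenvalues i ≠ 0}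
      = Fintype.card (ι × κ) - Fintype.card {i // hH.eigenvalues i ≠ 0} :=
    Fintype.card_subtype_compl _
  have h3 : Fintype.card {i // hH.eigenvalues i ≠ 0} ≤ Fintype.card (ι × κ) :=
    Fintype.card_subtype_le _
  have h4 : 1 < Fintype.card {i // ¬ hH.eigenvalues i ≠ 0} := by omega
  obtain ⟨a, b, hab⟩ := Fintype.exists_pair_of_one_lt_card h4
  exact ⟨a.1, b.1, fun h => hab (Subtype.ext h), not_not.mp a.2, not_not.mp b.2⟩

lemma trace_eq_sum_eigs {α : Type*} [Fintype α] [DecidableEq α] {σ : Matrix α α ℂ}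
    (hH : σ.IsHermitian) : σ.trace = ∑ i, (hH.eigenvalues i : ℂ) := by
  conv_lhs => rw [hH.spectral_theorem, Unitary.conjStarAlgAut_apply]
  rw [Matrix.trace_mul_cycle]
  rw [show star (hH.eigenvectorUnitary : Matrix α α ℂ) * (hH.eigenvectorUnitary : Matrix α α ℂ) = 1
    from (Unitary.mem_iff.mp hH.eigenvectorUnitary.2).1]
  rw [one_mul, Matrix.trace_diagonal]
  rfl

lemma tensorMap_kron (Φ₁ : Matrix ι ι ℂ →ₗ[ℂ] Matrix ι ι ℂ) (Φ₂ : Matrix κ κ ℂ →ₗ[ℂ] Matrix κ κ ℂ)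
    (A : Matrix ι ι ℂ) (B : Matrix κ κ ℂ) :
    tensorMap Φ₁ Φ₂ (A ⊗ₖ B) = (Φ₁ A) ⊗ₖ (Φ₂ B) := by
  ext ⟨p1, p2⟩ ⟨q1, q2⟩
  show ∑ a, ∑ b, Φ₁ (Matrix.single a b 1) p1 q1 *
      Φ₂ (Matrix.of fun c e => (A ⊗ₖ B) (a, c) (b, e)) p2 q2
    = (Φ₁ A) p1 q1 * (Φ₂ B) p2 q2
  have hin : ∀ a b, (Matrix.of fun c e => (A ⊗ₖ B) (a, c) (b, e)) = A a b • B := by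
    intro a b; ext c e
    simp [kroneckerMap_apply]
  have hA1 : Φ₁ A = ∑ a, ∑ b, A a b • Φ₁ (Matrix.single a b 1) := by
    conv_lhs => rw [matrix_eq_sum_single A]
    rw [map_sum]
    refine Finset.sum_congr rfl fun a _ => ?_
    rw [map_sum]
    refine Finset.sum_congr rfl fun b _ => ?_
    have : Matrix.single a b (A a b) = A a b • Matrix.single a b (1:ℂ) := by
      rw [Matrix.smul_single, smul_eq_mul, mul_one]
    rw [this, _root_.map_smul]
  simp only [hin, _root_.map_smul, Matrix.smul_apply, smul_eq_mul]
  rw [hA1]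
  simp only [Matrix.sum_apply, Matrix.smul_apply, smul_eq_mul, Finset.sum_mul]
  refine Finset.sum_congr rfl fun a _ => Finset.sum_congr rfl fun b _ => by ring

set_option maxHeartbeats 1600000 in
lemma key {m n : ℕ} (hm : 2 ≤ m) (hn : 2 ≤ n)
    {A : Matrix (Fin m) (Fin m) ℂ} {B : Matrix (Fin n) (Fin n) ℂ}
    (hA : A.PosSemidef) (hB : B.PosSemidef)
    (htrA : A.trace = 1) (htrB : B.trace = 1)
    (hdet : A.det = 0 ∨ B.det = 0) :
    ¬ IsAbsSep (A ⊗ₖ B) := by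
  classical
  haveI : NeZero m := ⟨by omega⟩
  haveI : NeZero n := ⟨by omega⟩
  intro habs
  set f0m : Fin m := ⟨0, by omega⟩ with hf0m
  set f1m : Fin m := ⟨1, by omega⟩ with hf1m
  set f0n : Fin n := ⟨0, by omega⟩ with hf0n
  set f1n : Fin n := ⟨1, by omega⟩ with hf1n
  have h0m : f0m ≠ f1m := fun h => zero_ne_one (congrArg Fin.val h)
  have h0n : f0n ≠ f1n := fun h => zero_ne_one (congrArg Fin.val h)
  set σ : Matrix (Fin m × Fin n) (Fin m × Fin n) ℂ := A ⊗ₖ B with hσdef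
  have hσ : σ.PosSemidef := psd_kron hA hB
  have hH : σ.IsHermitian := hσ.1
  -- two independent kernel vectors
  have hker : ∃ u v : Fin m × Fin n → ℂ,
      σ *ᵥ u = 0 ∧ σ *ᵥ v = 0 ∧ LinearIndependent ℂ ![u, v] := by
    rcases hdet with hd | hd
    · obtain ⟨x, hx0, hx⟩ := Matrix.exists_mulVec_eq_zero_iff.mpr hd
      refine ⟨fun p => x p.1 * ((fun c : Fin n => if c = f0n then (1:ℂ) else 0) p.2),
              fun p => x p.1 * ((fun c : Fin n => if c = f1n then (1:ℂ) else 0) p.2),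
              ?_, ?_, indep_left hx0 h0n⟩
      · have h := kron_mulVec A B x (fun c : Fin n => if c = f0n then (1:ℂ) else 0)
        rw [hx] at h
        exact h.trans (by funext p; simp)
      · have h := kron_mulVec A B x (fun c : Fin n => if c = f1n then (1:ℂ) else 0)
        rw [hx] at h
        exact h.trans (by funext p; simp)
    · obtain ⟨x, hx0, hx⟩ := Matrix.exists_mulVec_eq_zero_iff.mpr hd
      refine ⟨fun p => ((fun c : Fin m => if c = f0m then (1:ℂ) else 0) p.1) * x p.2,
              fun p => ((fun c : Fin m => if c = f1m then (1:ℂ) else 0) p.1) * x p.2,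
              ?_, ?_, indep_right hx0 h0m⟩
      · have h := kron_mulVec A B (fun c : Fin m => if c = f0m then (1:ℂ) else 0) x
        rw [hx] at h
        exact h.trans (by funext p; simp)
      · have h := kron_mulVec A B (fun c : Fin m => if c = f1m then (1:ℂ) else 0) x
        rw [hx] at h
        exact h.trans (by funext p; simp)
  obtain ⟨u, v, hu, hv, hind⟩ := hker
  obtain ⟨i, j, hij, hei, hej⟩ := two_zero_eigs hH hu hv hind
  -- a strictly positive eigenvalue
  have htrσ : σ.trace = 1 := by
    rw [hσdef, Matrix.trace_kronecker, htrA, htrB, mul_one]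
  have hsum : ∑ b, (hH.eigenvalues b : ℂ) = 1 := by
    rw [← trace_eq_sum_eigs hH, htrσ]
  have hexk : ∃ k, hH.eigenvalues k ≠ 0 := by
    by_contra hall; push_neg at hall
    rw [Finset.sum_eq_zero (fun b _ => by rw [hall b, Complex.ofReal_zero])] at hsum
    exact zero_ne_one hsum
  obtain ⟨k, hk⟩ := hexk
  have htpos : 0 < hH.eigenvalues k := lt_of_le_of_ne (hσ.eigenvalues_nonneg k) (Ne.symm hk)
  have hki : k ≠ i := fun h => hk (h ▸ hei)
  have hkj : k ≠ j := fun h => hk (h ▸ hej)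
  -- the four corner points
  set p00 : Fin m × Fin n := (f0m, f0n) with hp00def
  set p01 : Fin m × Fin n := (f0m, f1n) with hp01def
  set p10 : Fin m × Fin n := (f1m, f0n) with hp10def
  set p11 : Fin m × Fin n := (f1m, f1n) with hp11def
  have hd0001 : p00 ≠ p01 := fun h => h0n (congrArg Prod.snd h)
  have hd0011 : p00 ≠ p11 := fun h => h0n (congrArg Prod.snd h)
  have hd0111 : p01 ≠ p11 := fun h => h0m (congrArg Prod.fst h)
  have hd0110 : p01 ≠ p10 := fun h => h0m (congrArg Prod.fst h)
  have hd0100 : p01 ≠ p00 := Ne.symm hd0001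
  have hd1000' : p10 ≠ p00 := fun h => h0m (congrArg Prod.fst h).symm
  have hd1011 : p10 ≠ p11 := fun h => h0n (congrArg Prod.snd h)
  obtain ⟨π, hπk, hπi, hπj⟩ := exists_perm3 hki hkj hij hd0001 hd0011 hd0111
  set d : Fin m × Fin n → ℂ := fun a => (RCLike.ofReal ∘ hH.eigenvalues) (π.symm a) with hddef
  have hsymm00 : π.symm p00 = k := by rw [← hπk, Equiv.symm_apply_apply]
  have hsymm01 : π.symm p01 = i := by rw [← hπi, Equiv.symm_apply_apply]
  have hsymm11 : π.symm p11 = j := by rw [← hπj, Equiv.symm_apply_apply]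
  have hd00 : d p00 = (hH.eigenvalues k : ℂ) := by rw [hddef]; simp [hsymm00]
  have hd01 : d p01 = 0 := by rw [hddef]; simp [hsymm01, hei]
  have hd11 : d p11 = 0 := by rw [hddef]; simp [hsymm11, hej]
  -- assemble the unitary
  set W : Matrix (Fin m × Fin n) (Fin m × Fin n) ℂ
      := (hH.eigenvectorUnitary : Matrix (Fin m × Fin n) (Fin m × Fin n) ℂ) with hWdef
  have hW1 : W * Wᴴ = 1 := by
    rw [← Matrix.star_eq_conjTranspose]
    exact (Unitary.mem_iff.mp hH.eigenvectorUnitary.2).2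
  have hW2 : Wᴴ * W = 1 := by
    rw [← Matrix.star_eq_conjTranspose]
    exact (Unitary.mem_iff.mp hH.eigenvectorUnitary.2).1
  set P : Matrix (Fin m × Fin n) (Fin m × Fin n) ℂ := permM π with hPdef
  set V : Matrix (Fin m × Fin n) (Fin m × Fin n) ℂ := Vm p00 p11 with hVdef
  set U : Matrix (Fin m × Fin n) (Fin m × Fin n) ℂ := V * P * Wᴴ with hUdef
  have hcW : ∀ X, Wᴴ * (W * X) = X := fun X => by rw [← mul_assoc, hW2, one_mul]
  have hcP : ∀ X, P * (Pᴴ * X) = X := fun X => by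
    rw [← mul_assoc, hPdef, permM_unitary, one_mul]
  have hUU : U * Uᴴ = 1 := by
    rw [hUdef]
    simp only [conjTranspose_mul, conjTranspose_conjTranspose]
    simp only [mul_assoc]
    rw [hcW, hcP, hVdef, Vm_unitary hd0011]
  have hτ : U * σ * Uᴴ = V * diagonal d * Vᴴ := by
    have hspec : σ = W * diagonal (RCLike.ofReal ∘ hH.eigenvalues) * Wᴴ := by
      rw [← Matrix.star_eq_conjTranspose, hWdef]
      exact hH.spectral_theorem
    rw [hUdef, hspec]
    simp only [conjTranspose_mul, conjTranspose_conjTranspose]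
    simp only [mul_assoc]
    rw [hcW, hcW]
    have hPDP : P * (diagonal (RCLike.ofReal ∘ hH.eigenvalues) * (Pᴴ * Vᴴ))
        = diagonal d * Vᴴ := by
      rw [← mul_assoc, ← mul_assoc]
      rw [hPdef, permM_diag π (RCLike.ofReal ∘ hH.eigenvalues)]
    rw [hPDP]
  have hsep : IsSep (V * diagonal d * Vᴴ) := by
    have := habs U hUU
    rwa [hτ] at this
  -- entries of τ
  set τ : Matrix (Fin m × Fin n) (Fin m × Fin n) ℂ := V * diagonal d * Vᴴ with hτdef
  have e1 : τ p01 p01 = 0 := by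
    rw [hτdef, hVdef, VDV_out hd0011 hd0100 hd0111 d, hd01]
  have e2 : τ p10 p10 = d p10 := by
    rw [hτdef, hVdef, VDV_out hd0011 hd1000' hd1011 d]
  have e3 : τ p00 p11 = (hH.eigenvalues k : ℂ) / 2 := by
    rw [hτdef, hVdef, VDV_01 hd0011 d, hd00, hd11, sub_zero]
  have e4 : τ p11 p00 = (hH.eigenvalues k : ℂ) / 2 := by
    rw [hτdef, hVdef, VDV_10 hd0011 d, hd00, hd11, sub_zero]
  -- the witness vector
  set t : ℝ := hH.eigenvalues k with htdef
  set s : ℝ := hH.eigenvalues (π.symm p10) with hsdef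
  have hs : 0 ≤ s := hσ.eigenvalues_nonneg _
  have hd10 : d p10 = (s : ℂ) := by rw [hddef]; simp [hsdef]
  set xc : ℂ := ((-(s+1)/t : ℝ) : ℂ) with hxcdef
  set vv : Fin m × Fin n → ℂ := fun a => if a = p01 then xc else if a = p10 then 1 else 0
    with hvvdef
  have hform := sep_PT_form_nonneg hsep vv
  -- compute the quadratic form
  have hPT1 : PT τ p01 p01 = τ p01 p01 := rfl
  have hPT2 : PT τ p01 p10 = τ p00 p11 := rfl
  have hPT3 : PT τ p10 p01 = τ p11 p00 := rfl
  have hPT4 : PT τ p10 p10 = τ p10 p10 := rfl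
  have hg : ∀ a, (PT τ *ᵥ vv) a = PT τ a p01 * xc + PT τ a p10 := by
    intro a
    simp only [mulVec, dotProduct]
    have hkey : ∀ b, PT τ a b * vv b
        = if b = p01 then PT τ a p01 * xc else if b = p10 then PT τ a p10 else 0 := by
      intro b
      simp only [hvvdef]
      by_cases h1 : b = p01
      · rw [if_pos h1, if_pos h1, h1]
      · rw [if_neg h1, if_neg h1]
        by_cases h2 : b = p10
        · rw [if_pos h2, if_pos h2, h2, mul_one]
        · rw [if_neg h2, if_neg h2, mul_zero]
    rw [Finset.sum_congr rfl fun b _ => hkey b, sum_pair hd0110]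
  have hform_eq : star vv ⬝ᵥ (PT τ *ᵥ vv)
      = star xc * (PT τ p01 p01 * xc + PT τ p01 p10)
        + (PT τ p10 p01 * xc + PT τ p10 p10) := by
    simp only [dotProduct, Pi.star_apply]
    have hkey : ∀ a, star (vv a) * (PT τ *ᵥ vv) a
        = if a = p01 then star xc * (PT τ p01 p01 * xc + PT τ p01 p10)
          else if a = p10 then (PT τ p10 p01 * xc + PT τ p10 p10) else 0 := by
      intro a
      rw [hg a]
      simp only [hvvdef]
      by_cases h1 : a = p01
      · rw [if_pos h1, if_pos h1, h1]
      · rw [if_neg h1, if_neg h1]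
        by_cases h2 : a = p10
        · rw [if_pos h2, if_pos h2, h2, star_one, one_mul]
        · rw [if_neg h2, if_neg h2, star_zero, zero_mul]
    rw [Finset.sum_congr rfl fun a _ => hkey a, sum_pair hd0110]
  have hstarxc : star xc = xc := by rw [hxcdef]; exact Complex.conj_ofReal _
  have htne : (t : ℂ) ≠ 0 := by
    simp only [ne_eq, Complex.ofReal_eq_zero]
    exact ne_of_gt htpos
  have hxct : xc * (t : ℂ) = ((-(s+1) : ℝ) : ℂ) := by
    rw [hxcdef, ← Complex.ofReal_mul, div_mul_cancel₀]
    exact ne_of_gt htpos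
  have hval : star vv ⬝ᵥ (PT τ *ᵥ vv) = -1 := by
    rw [hform_eq, hPT1, hPT2, hPT3, hPT4, e1, e2, e3, e4, hd10, hstarxc]
    have harith : xc * (0 * xc + (t:ℂ)/2) + ((t:ℂ)/2 * xc + (s:ℂ))
        = xc * (t:ℂ) + (s:ℂ) := by ring
    rw [harith, hxct]
    push_cast
    ring
  rw [hval] at hform
  have hcontr := (Complex.le_def.mp hform).1
  simp only [Complex.zero_re, Complex.neg_re, Complex.one_re] at hcontr
  linarith

end Stmt7Aux

theorem stmt7 (m n : ℕ) (hm : 2 ≤ m) (hn : 2 ≤ n)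
    (Φ₁ : Matrix (Fin m) (Fin m) ℂ →ₗ[ℂ] Matrix (Fin m) (Fin m) ℂ)
    (Φ₂ : Matrix (Fin n) (Fin n) ℂ →ₗ[ℂ] Matrix (Fin n) (Fin n) ℂ)
    (h1pos : ∀ X, X.PosSemidef → (Φ₁ X).PosSemidef)
    (h1tr : ∀ X, (Φ₁ X).trace = X.trace)
    (h2pos : ∀ X, X.PosSemidef → (Φ₂ X).PosSemidef)
    (h2tr : ∀ X, (Φ₂ X).trace = X.trace)
    (hsing : (∃ ρ₁, IsDM ρ₁ ∧ (Φ₁ ρ₁).det = 0) ∨ (∃ ρ₂, IsDM ρ₂ ∧ (Φ₂ ρ₂).det = 0)) :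
    ¬ ∀ ρ, IsDM ρ → IsAbsSep (tensorMap Φ₁ Φ₂ ρ) := by
  intro hall
  rcases hsing with ⟨ρ₁, hρ₁, hdet⟩ | ⟨ρ₂, hρ₂, hdet⟩
  · set ρ₂ : Matrix (Fin n) (Fin n) ℂ := diagonal (fun _ => Complex.ofReal ((n:ℝ)⁻¹)) with hρ₂def
    have hρ₂psd : ρ₂.PosSemidef := by
      refine Matrix.posSemidef_diagonal_iff.mpr fun i => ?_
      rw [Complex.le_def]
      constructor
      · simp only [Complex.zero_re, Complex.ofReal_re]
        positivity
      · simp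
    have hρ₂tr : ρ₂.trace = 1 := by
      rw [hρ₂def, Matrix.trace_diagonal]
      rw [Finset.sum_const, Finset.card_univ, Fintype.card_fin, nsmul_eq_mul]
      rw [show Complex.ofReal ((n:ℝ)⁻¹) = ((n:ℂ))⁻¹ by push_cast; ring]
      exact mul_inv_cancel₀ (Nat.cast_ne_zero.mpr (by omega))
    have hDM : IsDM (ρ₁ ⊗ₖ ρ₂) :=
      ⟨Stmt7Aux.psd_kron hρ₁.1 hρ₂psd, by rw [Matrix.trace_kronecker, hρ₁.2, hρ₂tr, one_mul]⟩
    have habs := hall _ hDM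
    rw [Stmt7Aux.tensorMap_kron] at habs
    exact Stmt7Aux.key hm hn (h1pos _ hρ₁.1) (h2pos _ hρ₂psd)
      (by rw [h1tr, hρ₁.2]) (by rw [h2tr, hρ₂tr]) (Or.inl hdet) habs
  · set ρ₁ : Matrix (Fin m) (Fin m) ℂ := diagonal (fun _ => Complex.ofReal ((m:ℝ)⁻¹)) with hρ₁def
    have hρ₁psd : ρ₁.PosSemidef := by
      refine Matrix.posSemidef_diagonal_iff.mpr fun i => ?_
      rw [Complex.le_def]
      constructor
      · simp only [Complex.zero_re, Complex.ofReal_re]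
        positivity
      · simp
    have hρ₁tr : ρ₁.trace = 1 := by
      rw [hρ₁def, Matrix.trace_diagonal]
      rw [Finset.sum_const, Finset.card_univ, Fintype.card_fin, nsmul_eq_mul]
      rw [show Complex.ofReal ((m:ℝ)⁻¹) = ((m:ℂ))⁻¹ by push_cast; ring]
      exact mul_inv_cancel₀ (Nat.cast_ne_zero.mpr (by omega))
    have hDM : IsDM (ρ₁ ⊗ₖ ρ₂) :=
      ⟨Stmt7Aux.psd_kron hρ₁psd hρ₂.1, by rw [Matrix.trace_kronecker, hρ₁tr, hρ₂.2, one_mul]⟩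
    have habs := hall _ hDM
    rw [Stmt7Aux.tensorMap_kron] at habs
    exact Stmt7Aux.key hm hn (h1pos _ hρ₁psd) (h2pos _ hρ₂.1)
      (by rw [h1tr, hρ₁tr]) (by rw [h2tr, hρ₂.2]) (Or.inr hdet) habs

end
end

section
/- Let m, n ≥ 2 and let Φ be a positive trace-preserving linear map on mn×mn complex matrices. If the maximal output purity satisfies ‖Φ‖²_{1→2} > 9/(mn+8), i.e., there exists a density matrix ρ on ℂ^{mn} with tr((Φ[ρ])²) > 9/(mn+8), then Φ is not absolutely separating with respect to the bipartition m|n. -/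
open Matrix Kronecker BigOperators
open scoped ComplexOrder

noncomputable section


set_option maxHeartbeats 1000000

namespace Aux8
variable {ι κ : Type*} [Fintype ι] [Fintype κ] [DecidableEq ι] [DecidableEq κ]

/-- partial transpose -/
def pt (M : Matrix (ι × κ) (ι × κ) ℂ) : Matrix (ι × κ) (ι × κ) ℂ :=
  Matrix.of fun x y => M (y.1, x.2) (x.1, y.2)

lemma kron_conjT (A : Matrix ι ι ℂ) (B : Matrix κ κ ℂ) :
    (A ⊗ₖ B)ᴴ = Aᴴ ⊗ₖ Bᴴ := by
  ext ⟨a,b⟩ ⟨a',b'⟩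
  simp [conjTranspose_apply, kroneckerMap_apply]

lemma posSemidef_kron {A : Matrix ι ι ℂ} {B : Matrix κ κ ℂ}
    (hA : A.PosSemidef) (hB : B.PosSemidef) : (A ⊗ₖ B).PosSemidef := by
  exact hA.kronecker hB

lemma pt_smul (c : ℂ) (M : Matrix (ι × κ) (ι × κ) ℂ) : pt (c • M) = c • pt M := rfl

lemma pt_sep_posSemidef {ρ : Matrix (ι × κ) (ι × κ) ℂ} (h : IsSep ρ) :
    (pt ρ).PosSemidef := by
  obtain ⟨k, p, A, B, hp, -, hA, hB, rfl⟩ := h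
  have hpt : pt (∑ i, (p i : ℂ) • (A i ⊗ₖ B i)) = ∑ i, (p i : ℂ) • ((A i)ᵀ ⊗ₖ B i) := by
    ext x y
    simp only [pt, Matrix.of_apply, Matrix.sum_apply, Matrix.smul_apply, kroneckerMap_apply,
      transpose_apply, smul_eq_mul]
  rw [hpt]
  apply Finset.sum_induction _ _ (fun a b ha hb => ha.add hb) Matrix.PosSemidef.zero
  intro i _
  have hABpsd : ((A i)ᵀ ⊗ₖ B i).PosSemidef := posSemidef_kron (hA i).1.transpose (hB i).1
  have hc : (0:ℂ) ≤ (p i : ℂ) := by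
    rw [Complex.zero_le_real]; exact hp i
  apply Matrix.PosSemidef.of_dotProduct_mulVec_nonneg
  · show _ = _
    rw [conjTranspose_smul, hABpsd.1]
    congr 1
    exact Complex.conj_ofReal _
  · intro x
    rw [Matrix.smul_mulVec, dotProduct_smul]
    exact smul_nonneg hc (hABpsd.dotProduct_mulVec_nonneg x)

lemma inner_single_same {I : Type*} [Fintype I] [DecidableEq I] (p : I) (a e : ℂ) :
    (inner ℂ (EuclideanSpace.single p a) (EuclideanSpace.single p e) : ℂ)
      = (starRingEnd ℂ) a * e := by
  rw [EuclideanSpace.inner_single_left, EuclideanSpace.single_apply, if_pos rfl]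

lemma inner_single_ne {I : Type*} [Fintype I] [DecidableEq I] {p q : I} (h : p ≠ q)
    (a e : ℂ) :
    (inner ℂ (EuclideanSpace.single p a) (EuclideanSpace.single q e) : ℂ) = 0 := by
  rw [EuclideanSpace.inner_single_left, EuclideanSpace.single_apply, if_neg h, mul_zero]

lemma euclid_inner {I : Type*} [Fintype I] (x y : EuclideanSpace ℂ I) :
    (inner ℂ x y : ℂ) = ∑ i, (starRingEnd ℂ) (x i) * y i := by
  simp [PiLp.inner_apply, RCLike.inner_apply, mul_comm]

end Aux8

theorem stmt8 (m n : ℕ) (hm : 2 ≤ m) (hn : 2 ≤ n)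
    (Φ : Matrix (Fin m × Fin n) (Fin m × Fin n) ℂ →ₗ[ℂ]
      Matrix (Fin m × Fin n) (Fin m × Fin n) ℂ)
    (hpos : ∀ X, X.PosSemidef → (Φ X).PosSemidef)
    (htr : ∀ X, (Φ X).trace = X.trace)
    (hpur : ∃ ρ, IsDM ρ ∧ 9 / ((m : ℝ) * n + 8) < ((Φ ρ * Φ ρ).trace).re) :
    ¬ ∀ ρ, IsDM ρ → IsAbsSep (Φ ρ) := by
  intro hcon
  obtain ⟨ρ, hρ, hpur⟩ := hpur
  have hmn4 : 4 ≤ m * n := by nlinarith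
  set σ := Φ ρ with hσdef
  have hpsd : σ.PosSemidef := hpos ρ hρ.1
  have hH : σ.IsHermitian := hpsd.1
  set lam := hH.eigenvalues with hlam
  have hnn : ∀ i, 0 ≤ lam i := hpsd.eigenvalues_nonneg
  set cV : Matrix (Fin m × Fin n) (Fin m × Fin n) ℂ :=
    (hH.eigenvectorUnitary : Matrix (Fin m × Fin n) (Fin m × Fin n) ℂ) with hcV
  have h1 : cVᴴ * cV = 1 := by
    rw [← Matrix.star_eq_conjTranspose]
    exact Matrix.mem_unitaryGroup_iff'.mp hH.eigenvectorUnitary.2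
  have h2 : cV * cVᴴ = 1 := by
    rw [← Matrix.star_eq_conjTranspose]
    exact Matrix.mem_unitaryGroup_iff.mp hH.eigenvectorUnitary.2
  set D : Matrix (Fin m × Fin n) (Fin m × Fin n) ℂ :=
    Matrix.diagonal (fun i => (lam i : ℂ)) with hD
  have hspec : σ = cV * D * cVᴴ := by
    conv_lhs => rw [hH.spectral_theorem]
    rfl
  -- trace facts
  have htrσ : σ.trace = 1 := by rw [hσdef, htr]; exact hρ.2
  have htrD : σ.trace = ∑ i, (lam i : ℂ) := by
    rw [hspec, Matrix.trace_mul_cycle, h1, one_mul, hD, Matrix.trace_diagonal]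
  have hsum : ∑ i, lam i = 1 := by
    have h := htrD.symm.trans htrσ
    exact_mod_cast h
  have hσσ : σ * σ = cV * (D * D) * cVᴴ := by
    rw [hspec]
    simp only [Matrix.mul_assoc]
    rw [show cVᴴ * (cV * (D * cVᴴ)) = D * cVᴴ by rw [← Matrix.mul_assoc, h1, one_mul]]
  have hsum2 : ((σ * σ).trace).re = ∑ i, lam i * lam i := by
    rw [hσσ, Matrix.trace_mul_cycle, h1, one_mul, hD, Matrix.diagonal_mul_diagonal,
      Matrix.trace_diagonal]
    have hc : (∑ i, ((lam i : ℂ) * (lam i : ℂ))) = ((∑ i, lam i * lam i : ℝ) : ℂ) := by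
      push_cast
      rfl
    rw [hc, Complex.ofReal_re]
  -- index selection
  obtain ⟨i₁, -, hmax⟩ := Finset.exists_max_image Finset.univ lam ⟨_, Finset.mem_univ
    ((⟨0, by omega⟩, ⟨0, by omega⟩) : Fin m × Fin n)⟩
  have hmax' : ∀ i, lam i ≤ lam i₁ := fun i => hmax i (Finset.mem_univ i)
  have hcardI : Fintype.card (Fin m × Fin n) = m * n := by simp
  set s₁ := Finset.univ.erase i₁ with hs₁
  have hcard1 : s₁.card = m * n - 1 := by
    rw [hs₁, Finset.card_erase_of_mem (Finset.mem_univ _), Finset.card_univ, hcardI]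
  obtain ⟨j, hjmem, hjmin⟩ := Finset.exists_min_image s₁ lam (by
    rw [← Finset.card_pos, hcard1]; omega)
  set s₂ := s₁.erase j with hs₂
  have hcard2 : s₂.card = m * n - 2 := by
    rw [hs₂, Finset.card_erase_of_mem hjmem, hcard1]; omega
  obtain ⟨k, hkmem, hkmin⟩ := Finset.exists_min_image s₂ lam (by
    rw [← Finset.card_pos, hcard2]; omega)
  set s₃ := s₂.erase k with hs₃
  have hcard3 : s₃.card = m * n - 3 := by
    rw [hs₃, Finset.card_erase_of_mem hkmem, hcard2]; omega
  obtain ⟨l, hlmem, hlmin⟩ := Finset.exists_min_image s₃ lam (by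
    rw [← Finset.card_pos, hcard3]; omega)
  set s₄ := s₃.erase l with hs₄
  have hcard4 : s₄.card = m * n - 4 := by
    rw [hs₄, Finset.card_erase_of_mem hlmem, hcard3]; omega
  -- distinctness
  have hji : j ≠ i₁ := (Finset.mem_erase.mp hjmem).1
  have hkj : k ≠ j := (Finset.mem_erase.mp hkmem).1
  have hki : k ≠ i₁ := (Finset.mem_erase.mp (Finset.mem_erase.mp hkmem).2).1
  have hlk : l ≠ k := (Finset.mem_erase.mp hlmem).1
  have hlj : l ≠ j := (Finset.mem_erase.mp (Finset.mem_erase.mp hlmem).2).1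
  have hli : l ≠ i₁ :=
    (Finset.mem_erase.mp (Finset.mem_erase.mp (Finset.mem_erase.mp hlmem).2).2).1
  -- ordering
  have hjk : lam j ≤ lam k := hjmin k (Finset.mem_erase.mp hkmem).2
  have hkl : lam k ≤ lam l := hkmin l (Finset.mem_erase.mp hlmem).2
  -- sum decomposition
  have hdec : lam i₁ + (lam j + (lam k + (lam l + ∑ i ∈ s₄, lam i))) = 1 := by
    rw [hs₄, hs₃, hs₂, hs₁]
    rw [Finset.add_sum_erase _ lam hlmem, Finset.add_sum_erase _ lam hkmem,
      Finset.add_sum_erase _ lam hjmem, Finset.add_sum_erase _ lam (Finset.mem_univ i₁)]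
    exact hsum
  have hrest : ((m:ℝ) * n - 4) * lam l ≤ ∑ i ∈ s₄, lam i := by
    have h := Finset.card_nsmul_le_sum s₄ lam (lam l)
      (fun i hi => hlmin i (Finset.mem_of_mem_erase (hs₄ ▸ hi)))
    rw [hcard4, nsmul_eq_mul] at h
    have hcast : ((m * n - 4 : ℕ) : ℝ) = (m:ℝ) * n - 4 := by
      rw [Nat.cast_sub hmn4]
      push_cast
      ring
    rw [hcast] at h
    exact h
  -- the key eigenvalue inequality
  have hl1 : 9 / ((m : ℝ) * n + 8) < lam i₁ := by
    have hle : ∑ i, lam i * lam i ≤ lam i₁ := by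
      calc ∑ i, lam i * lam i ≤ ∑ i, lam i * lam i₁ :=
            Finset.sum_le_sum (fun i _ => mul_le_mul_of_nonneg_left (hmax' i) (hnn i))
        _ = (∑ i, lam i) * lam i₁ := by rw [← Finset.sum_mul]
        _ = lam i₁ := by rw [hsum, one_mul]
    rw [hsum2] at hpur
    linarith
  have hdmn : (4:ℝ) ≤ (m:ℝ) * n := by exact_mod_cast hmn4
  have htriple : lam j + lam k + lam l < lam i₁ := by
    have hd8 : (0:ℝ) < (m:ℝ) * n + 8 := by linarith
    have h9 : 9 < lam i₁ * ((m:ℝ) * n + 8) := (div_lt_iff₀ hd8).mp hl1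
    have hS4 : (0:ℝ) ≤ ∑ i ∈ s₄, lam i := Finset.sum_nonneg (fun i _ => hnn i)
    nlinarith [hdec, hrest, hjk, hkl, hnn j, hnn k, hnn l, hnn i₁, hS4,
      mul_nonneg (hnn l) (by linarith : (0:ℝ) ≤ (m:ℝ) * n - 4)]
  -- special coordinates
  set z00 : Fin m × Fin n := (⟨0, by omega⟩, ⟨0, by omega⟩) with hz00
  set z01 : Fin m × Fin n := (⟨0, by omega⟩, ⟨1, by omega⟩) with hz01
  set z10 : Fin m × Fin n := (⟨1, by omega⟩, ⟨0, by omega⟩) with hz10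
  set z11 : Fin m × Fin n := (⟨1, by omega⟩, ⟨1, by omega⟩) with hz11
  have hz1 : z00 ≠ z01 := by simp [hz00, hz01, Prod.ext_iff, Fin.ext_iff]
  have hz2 : z00 ≠ z10 := by simp [hz00, hz10, Prod.ext_iff, Fin.ext_iff]
  have hz3 : z00 ≠ z11 := by simp [hz00, hz11, Prod.ext_iff, Fin.ext_iff]
  have hz4 : z01 ≠ z10 := by simp [hz01, hz10, Prod.ext_iff, Fin.ext_iff]
  have hz5 : z01 ≠ z11 := by simp [hz01, hz11, Prod.ext_iff, Fin.ext_iff]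
  have hz6 : z10 ≠ z11 := by simp [hz10, hz11, Prod.ext_iff, Fin.ext_iff]
  set c : ℝ := (Real.sqrt 2)⁻¹ with hcdef
  have hcpos : 0 < c := by positivity
  have hcc : c * c = 1/2 := by
    rw [hcdef, ← mul_inv, Real.mul_self_sqrt (by norm_num : (0:ℝ) ≤ 2)]
    norm_num
  have hc2 : (c:ℂ) * (c:ℂ) = 1/2 := by
    rw [← Complex.ofReal_mul, hcc]
    push_cast
    ring
  set g1 : EuclideanSpace ℂ (Fin m × Fin n) :=
    (c:ℂ) • (EuclideanSpace.single z00 1 + EuclideanSpace.single z11 1) with hg1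
  set g4 : EuclideanSpace ℂ (Fin m × Fin n) :=
    (c:ℂ) • (EuclideanSpace.single z00 1 - EuclideanSpace.single z11 1) with hg4
  set e01 : EuclideanSpace ℂ (Fin m × Fin n) := EuclideanSpace.single z01 (1:ℂ) with he01
  set e10 : EuclideanSpace ℂ (Fin m × Fin n) := EuclideanSpace.single z10 (1:ℂ) with he10
  set v : (Fin m × Fin n) → EuclideanSpace ℂ (Fin m × Fin n) := fun i =>
    if i = i₁ then g1 else if i = j then e01 else if i = k then e10 else if i = l then g4
      else 0 with hv
  have hvi₁ : v i₁ = g1 := by simp [hv]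
  have hvj : v j = e01 := by simp [hv, hji]
  have hvk : v k = e10 := by simp [hv, hki, hkj]
  have hvl : v l = g4 := by simp [hv, hli, hlj, hlk]
  have hI_g1_g1 : (inner ℂ g1 g1 : ℂ) = 1 := by
    simp only [hg1, hg4, he01, he10, inner_smul_left, inner_smul_right, inner_add_left,
      inner_add_right, inner_sub_left, inner_sub_right, Aux8.inner_single_same,
      Aux8.inner_single_ne hz1, Aux8.inner_single_ne hz2, Aux8.inner_single_ne hz3,
      Aux8.inner_single_ne hz4, Aux8.inner_single_ne hz5, Aux8.inner_single_ne hz6,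
      Aux8.inner_single_ne hz1.symm, Aux8.inner_single_ne hz2.symm,
      Aux8.inner_single_ne hz3.symm, Aux8.inner_single_ne hz4.symm,
      Aux8.inner_single_ne hz5.symm, Aux8.inner_single_ne hz6.symm,
      Complex.conj_ofReal, _root_.map_one, mul_one, one_mul, mul_zero, zero_mul, add_zero,
      zero_add, sub_zero, zero_sub] <;>
      first
      | linear_combination (2:ℂ) * hc2
      | ring
      | norm_num
  have hI_g1_g4 : (inner ℂ g1 g4 : ℂ) = 0 := by
    simp only [hg1, hg4, he01, he10, inner_smul_left, inner_smul_right, inner_add_left,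
      inner_add_right, inner_sub_left, inner_sub_right, Aux8.inner_single_same,
      Aux8.inner_single_ne hz1, Aux8.inner_single_ne hz2, Aux8.inner_single_ne hz3,
      Aux8.inner_single_ne hz4, Aux8.inner_single_ne hz5, Aux8.inner_single_ne hz6,
      Aux8.inner_single_ne hz1.symm, Aux8.inner_single_ne hz2.symm,
      Aux8.inner_single_ne hz3.symm, Aux8.inner_single_ne hz4.symm,
      Aux8.inner_single_ne hz5.symm, Aux8.inner_single_ne hz6.symm,
      Complex.conj_ofReal, _root_.map_one, mul_one, one_mul, mul_zero, zero_mul, add_zero,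
      zero_add, sub_zero, zero_sub] <;>
      first
      | linear_combination (2:ℂ) * hc2
      | ring
      | norm_num
  have hI_g1_e01 : (inner ℂ g1 e01 : ℂ) = 0 := by
    simp only [hg1, hg4, he01, he10, inner_smul_left, inner_smul_right, inner_add_left,
      inner_add_right, inner_sub_left, inner_sub_right, Aux8.inner_single_same,
      Aux8.inner_single_ne hz1, Aux8.inner_single_ne hz2, Aux8.inner_single_ne hz3,
      Aux8.inner_single_ne hz4, Aux8.inner_single_ne hz5, Aux8.inner_single_ne hz6,
      Aux8.inner_single_ne hz1.symm, Aux8.inner_single_ne hz2.symm,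
      Aux8.inner_single_ne hz3.symm, Aux8.inner_single_ne hz4.symm,
      Aux8.inner_single_ne hz5.symm, Aux8.inner_single_ne hz6.symm,
      Complex.conj_ofReal, _root_.map_one, mul_one, one_mul, mul_zero, zero_mul, add_zero,
      zero_add, sub_zero, zero_sub] <;>
      first
      | linear_combination (2:ℂ) * hc2
      | ring
      | norm_num
  have hI_g1_e10 : (inner ℂ g1 e10 : ℂ) = 0 := by
    simp only [hg1, hg4, he01, he10, inner_smul_left, inner_smul_right, inner_add_left,
      inner_add_right, inner_sub_left, inner_sub_right, Aux8.inner_single_same,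
      Aux8.inner_single_ne hz1, Aux8.inner_single_ne hz2, Aux8.inner_single_ne hz3,
      Aux8.inner_single_ne hz4, Aux8.inner_single_ne hz5, Aux8.inner_single_ne hz6,
      Aux8.inner_single_ne hz1.symm, Aux8.inner_single_ne hz2.symm,
      Aux8.inner_single_ne hz3.symm, Aux8.inner_single_ne hz4.symm,
      Aux8.inner_single_ne hz5.symm, Aux8.inner_single_ne hz6.symm,
      Complex.conj_ofReal, _root_.map_one, mul_one, one_mul, mul_zero, zero_mul, add_zero,
      zero_add, sub_zero, zero_sub] <;>
      first
      | linear_combination (2:ℂ) * hc2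
      | ring
      | norm_num
  have hI_g4_g1 : (inner ℂ g4 g1 : ℂ) = 0 := by
    simp only [hg1, hg4, he01, he10, inner_smul_left, inner_smul_right, inner_add_left,
      inner_add_right, inner_sub_left, inner_sub_right, Aux8.inner_single_same,
      Aux8.inner_single_ne hz1, Aux8.inner_single_ne hz2, Aux8.inner_single_ne hz3,
      Aux8.inner_single_ne hz4, Aux8.inner_single_ne hz5, Aux8.inner_single_ne hz6,
      Aux8.inner_single_ne hz1.symm, Aux8.inner_single_ne hz2.symm,
      Aux8.inner_single_ne hz3.symm, Aux8.inner_single_ne hz4.symm,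
      Aux8.inner_single_ne hz5.symm, Aux8.inner_single_ne hz6.symm,
      Complex.conj_ofReal, _root_.map_one, mul_one, one_mul, mul_zero, zero_mul, add_zero,
      zero_add, sub_zero, zero_sub] <;>
      first
      | linear_combination (2:ℂ) * hc2
      | ring
      | norm_num
  have hI_g4_g4 : (inner ℂ g4 g4 : ℂ) = 1 := by
    simp only [hg1, hg4, he01, he10, inner_smul_left, inner_smul_right, inner_add_left,
      inner_add_right, inner_sub_left, inner_sub_right, Aux8.inner_single_same,
      Aux8.inner_single_ne hz1, Aux8.inner_single_ne hz2, Aux8.inner_single_ne hz3,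
      Aux8.inner_single_ne hz4, Aux8.inner_single_ne hz5, Aux8.inner_single_ne hz6,
      Aux8.inner_single_ne hz1.symm, Aux8.inner_single_ne hz2.symm,
      Aux8.inner_single_ne hz3.symm, Aux8.inner_single_ne hz4.symm,
      Aux8.inner_single_ne hz5.symm, Aux8.inner_single_ne hz6.symm,
      Complex.conj_ofReal, _root_.map_one, mul_one, one_mul, mul_zero, zero_mul, add_zero,
      zero_add, sub_zero, zero_sub] <;>
      first
      | linear_combination (2:ℂ) * hc2
      | ring
      | norm_num
  have hI_g4_e01 : (inner ℂ g4 e01 : ℂ) = 0 := by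
    simp only [hg1, hg4, he01, he10, inner_smul_left, inner_smul_right, inner_add_left,
      inner_add_right, inner_sub_left, inner_sub_right, Aux8.inner_single_same,
      Aux8.inner_single_ne hz1, Aux8.inner_single_ne hz2, Aux8.inner_single_ne hz3,
      Aux8.inner_single_ne hz4, Aux8.inner_single_ne hz5, Aux8.inner_single_ne hz6,
      Aux8.inner_single_ne hz1.symm, Aux8.inner_single_ne hz2.symm,
      Aux8.inner_single_ne hz3.symm, Aux8.inner_single_ne hz4.symm,
      Aux8.inner_single_ne hz5.symm, Aux8.inner_single_ne hz6.symm,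
      Complex.conj_ofReal, _root_.map_one, mul_one, one_mul, mul_zero, zero_mul, add_zero,
      zero_add, sub_zero, zero_sub] <;>
      first
      | linear_combination (2:ℂ) * hc2
      | ring
      | norm_num
  have hI_g4_e10 : (inner ℂ g4 e10 : ℂ) = 0 := by
    simp only [hg1, hg4, he01, he10, inner_smul_left, inner_smul_right, inner_add_left,
      inner_add_right, inner_sub_left, inner_sub_right, Aux8.inner_single_same,
      Aux8.inner_single_ne hz1, Aux8.inner_single_ne hz2, Aux8.inner_single_ne hz3,
      Aux8.inner_single_ne hz4, Aux8.inner_single_ne hz5, Aux8.inner_single_ne hz6,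
      Aux8.inner_single_ne hz1.symm, Aux8.inner_single_ne hz2.symm,
      Aux8.inner_single_ne hz3.symm, Aux8.inner_single_ne hz4.symm,
      Aux8.inner_single_ne hz5.symm, Aux8.inner_single_ne hz6.symm,
      Complex.conj_ofReal, _root_.map_one, mul_one, one_mul, mul_zero, zero_mul, add_zero,
      zero_add, sub_zero, zero_sub] <;>
      first
      | linear_combination (2:ℂ) * hc2
      | ring
      | norm_num
  have hI_e01_g1 : (inner ℂ e01 g1 : ℂ) = 0 := by
    simp only [hg1, hg4, he01, he10, inner_smul_left, inner_smul_right, inner_add_left,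
      inner_add_right, inner_sub_left, inner_sub_right, Aux8.inner_single_same,
      Aux8.inner_single_ne hz1, Aux8.inner_single_ne hz2, Aux8.inner_single_ne hz3,
      Aux8.inner_single_ne hz4, Aux8.inner_single_ne hz5, Aux8.inner_single_ne hz6,
      Aux8.inner_single_ne hz1.symm, Aux8.inner_single_ne hz2.symm,
      Aux8.inner_single_ne hz3.symm, Aux8.inner_single_ne hz4.symm,
      Aux8.inner_single_ne hz5.symm, Aux8.inner_single_ne hz6.symm,
      Complex.conj_ofReal, _root_.map_one, mul_one, one_mul, mul_zero, zero_mul, add_zero,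
      zero_add, sub_zero, zero_sub] <;>
      first
      | linear_combination (2:ℂ) * hc2
      | ring
      | norm_num
  have hI_e01_g4 : (inner ℂ e01 g4 : ℂ) = 0 := by
    simp only [hg1, hg4, he01, he10, inner_smul_left, inner_smul_right, inner_add_left,
      inner_add_right, inner_sub_left, inner_sub_right, Aux8.inner_single_same,
      Aux8.inner_single_ne hz1, Aux8.inner_single_ne hz2, Aux8.inner_single_ne hz3,
      Aux8.inner_single_ne hz4, Aux8.inner_single_ne hz5, Aux8.inner_single_ne hz6,
      Aux8.inner_single_ne hz1.symm, Aux8.inner_single_ne hz2.symm,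
      Aux8.inner_single_ne hz3.symm, Aux8.inner_single_ne hz4.symm,
      Aux8.inner_single_ne hz5.symm, Aux8.inner_single_ne hz6.symm,
      Complex.conj_ofReal, _root_.map_one, mul_one, one_mul, mul_zero, zero_mul, add_zero,
      zero_add, sub_zero, zero_sub] <;>
      first
      | linear_combination (2:ℂ) * hc2
      | ring
      | norm_num
  have hI_e01_e01 : (inner ℂ e01 e01 : ℂ) = 1 := by
    simp only [hg1, hg4, he01, he10, inner_smul_left, inner_smul_right, inner_add_left,
      inner_add_right, inner_sub_left, inner_sub_right, Aux8.inner_single_same,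
      Aux8.inner_single_ne hz1, Aux8.inner_single_ne hz2, Aux8.inner_single_ne hz3,
      Aux8.inner_single_ne hz4, Aux8.inner_single_ne hz5, Aux8.inner_single_ne hz6,
      Aux8.inner_single_ne hz1.symm, Aux8.inner_single_ne hz2.symm,
      Aux8.inner_single_ne hz3.symm, Aux8.inner_single_ne hz4.symm,
      Aux8.inner_single_ne hz5.symm, Aux8.inner_single_ne hz6.symm,
      Complex.conj_ofReal, _root_.map_one, mul_one, one_mul, mul_zero, zero_mul, add_zero,
      zero_add, sub_zero, zero_sub] <;>
      first
      | linear_combination (2:ℂ) * hc2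
      | ring
      | norm_num
  have hI_e01_e10 : (inner ℂ e01 e10 : ℂ) = 0 := by
    simp only [hg1, hg4, he01, he10, inner_smul_left, inner_smul_right, inner_add_left,
      inner_add_right, inner_sub_left, inner_sub_right, Aux8.inner_single_same,
      Aux8.inner_single_ne hz1, Aux8.inner_single_ne hz2, Aux8.inner_single_ne hz3,
      Aux8.inner_single_ne hz4, Aux8.inner_single_ne hz5, Aux8.inner_single_ne hz6,
      Aux8.inner_single_ne hz1.symm, Aux8.inner_single_ne hz2.symm,
      Aux8.inner_single_ne hz3.symm, Aux8.inner_single_ne hz4.symm,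
      Aux8.inner_single_ne hz5.symm, Aux8.inner_single_ne hz6.symm,
      Complex.conj_ofReal, _root_.map_one, mul_one, one_mul, mul_zero, zero_mul, add_zero,
      zero_add, sub_zero, zero_sub] <;>
      first
      | linear_combination (2:ℂ) * hc2
      | ring
      | norm_num
  have hI_e10_g1 : (inner ℂ e10 g1 : ℂ) = 0 := by
    simp only [hg1, hg4, he01, he10, inner_smul_left, inner_smul_right, inner_add_left,
      inner_add_right, inner_sub_left, inner_sub_right, Aux8.inner_single_same,
      Aux8.inner_single_ne hz1, Aux8.inner_single_ne hz2, Aux8.inner_single_ne hz3,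
      Aux8.inner_single_ne hz4, Aux8.inner_single_ne hz5, Aux8.inner_single_ne hz6,
      Aux8.inner_single_ne hz1.symm, Aux8.inner_single_ne hz2.symm,
      Aux8.inner_single_ne hz3.symm, Aux8.inner_single_ne hz4.symm,
      Aux8.inner_single_ne hz5.symm, Aux8.inner_single_ne hz6.symm,
      Complex.conj_ofReal, _root_.map_one, mul_one, one_mul, mul_zero, zero_mul, add_zero,
      zero_add, sub_zero, zero_sub] <;>
      first
      | linear_combination (2:ℂ) * hc2
      | ring
      | norm_num
  have hI_e10_g4 : (inner ℂ e10 g4 : ℂ) = 0 := by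
    simp only [hg1, hg4, he01, he10, inner_smul_left, inner_smul_right, inner_add_left,
      inner_add_right, inner_sub_left, inner_sub_right, Aux8.inner_single_same,
      Aux8.inner_single_ne hz1, Aux8.inner_single_ne hz2, Aux8.inner_single_ne hz3,
      Aux8.inner_single_ne hz4, Aux8.inner_single_ne hz5, Aux8.inner_single_ne hz6,
      Aux8.inner_single_ne hz1.symm, Aux8.inner_single_ne hz2.symm,
      Aux8.inner_single_ne hz3.symm, Aux8.inner_single_ne hz4.symm,
      Aux8.inner_single_ne hz5.symm, Aux8.inner_single_ne hz6.symm,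
      Complex.conj_ofReal, _root_.map_one, mul_one, one_mul, mul_zero, zero_mul, add_zero,
      zero_add, sub_zero, zero_sub] <;>
      first
      | linear_combination (2:ℂ) * hc2
      | ring
      | norm_num
  have hI_e10_e01 : (inner ℂ e10 e01 : ℂ) = 0 := by
    simp only [hg1, hg4, he01, he10, inner_smul_left, inner_smul_right, inner_add_left,
      inner_add_right, inner_sub_left, inner_sub_right, Aux8.inner_single_same,
      Aux8.inner_single_ne hz1, Aux8.inner_single_ne hz2, Aux8.inner_single_ne hz3,
      Aux8.inner_single_ne hz4, Aux8.inner_single_ne hz5, Aux8.inner_single_ne hz6,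
      Aux8.inner_single_ne hz1.symm, Aux8.inner_single_ne hz2.symm,
      Aux8.inner_single_ne hz3.symm, Aux8.inner_single_ne hz4.symm,
      Aux8.inner_single_ne hz5.symm, Aux8.inner_single_ne hz6.symm,
      Complex.conj_ofReal, _root_.map_one, mul_one, one_mul, mul_zero, zero_mul, add_zero,
      zero_add, sub_zero, zero_sub] <;>
      first
      | linear_combination (2:ℂ) * hc2
      | ring
      | norm_num
  have hI_e10_e10 : (inner ℂ e10 e10 : ℂ) = 1 := by
    simp only [hg1, hg4, he01, he10, inner_smul_left, inner_smul_right, inner_add_left,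
      inner_add_right, inner_sub_left, inner_sub_right, Aux8.inner_single_same,
      Aux8.inner_single_ne hz1, Aux8.inner_single_ne hz2, Aux8.inner_single_ne hz3,
      Aux8.inner_single_ne hz4, Aux8.inner_single_ne hz5, Aux8.inner_single_ne hz6,
      Aux8.inner_single_ne hz1.symm, Aux8.inner_single_ne hz2.symm,
      Aux8.inner_single_ne hz3.symm, Aux8.inner_single_ne hz4.symm,
      Aux8.inner_single_ne hz5.symm, Aux8.inner_single_ne hz6.symm,
      Complex.conj_ofReal, _root_.map_one, mul_one, one_mul, mul_zero, zero_mul, add_zero,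
      zero_add, sub_zero, zero_sub] <;>
      first
      | linear_combination (2:ℂ) * hc2
      | ring
      | norm_num
  set sS : Set (Fin m × Fin n) := {i₁, j, k, l} with hsS
  have horth : Orthonormal ℂ (sS.restrict v) := by
    rw [orthonormal_iff_ite]
    rintro ⟨p, hp⟩ ⟨q, hq⟩
    have hp' : p = i₁ ∨ p = j ∨ p = k ∨ p = l := by simpa [hsS] using hp
    have hq' : q = i₁ ∨ q = j ∨ q = k ∨ q = l := by simpa [hsS] using hq
    simp only [Set.restrict, Set.domRestrict_apply, Subtype.mk.injEq]
    rcases hp' with rfl|rfl|rfl|rfl <;> rcases hq' with rfl|rfl|rfl|rfl <;>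
      simp [-inner_self_eq_norm_sq_to_K, hvi₁, hvj, hvk, hvl, hji, hkj, hki, hlk, hlj, hli,
        hji.symm, hkj.symm, hki.symm, hlk.symm, hlj.symm, hli.symm,
        hI_g1_g1, hI_g1_g4, hI_g1_e01, hI_g1_e10, hI_g4_g1, hI_g4_g4, hI_g4_e01,
        hI_g4_e10, hI_e01_g1, hI_e01_g4, hI_e01_e01, hI_e01_e10, hI_e10_g1,
        hI_e10_g4, hI_e10_e01, hI_e10_e10]
  have hV_g1_z00 : g1 z00 = (c:ℂ) := by
    simp [hg1, hg4, he01, he10, EuclideanSpace.single_apply, hz1, hz2, hz3, hz4, hz5, hz6,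
      hz1.symm, hz2.symm, hz3.symm, hz4.symm, hz5.symm, hz6.symm]
  have hV_g1_z11 : g1 z11 = (c:ℂ) := by
    simp [hg1, hg4, he01, he10, EuclideanSpace.single_apply, hz1, hz2, hz3, hz4, hz5, hz6,
      hz1.symm, hz2.symm, hz3.symm, hz4.symm, hz5.symm, hz6.symm]
  have hV_g1_z01 : g1 z01 = 0 := by
    simp [hg1, hg4, he01, he10, EuclideanSpace.single_apply, hz1, hz2, hz3, hz4, hz5, hz6,
      hz1.symm, hz2.symm, hz3.symm, hz4.symm, hz5.symm, hz6.symm]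
  have hV_g1_z10 : g1 z10 = 0 := by
    simp [hg1, hg4, he01, he10, EuclideanSpace.single_apply, hz1, hz2, hz3, hz4, hz5, hz6,
      hz1.symm, hz2.symm, hz3.symm, hz4.symm, hz5.symm, hz6.symm]
  have hV_g4_z00 : g4 z00 = (c:ℂ) := by
    simp [hg1, hg4, he01, he10, EuclideanSpace.single_apply, hz1, hz2, hz3, hz4, hz5, hz6,
      hz1.symm, hz2.symm, hz3.symm, hz4.symm, hz5.symm, hz6.symm]
  have hV_g4_z11 : g4 z11 = (-c:ℂ) := by
    simp [hg1, hg4, he01, he10, EuclideanSpace.single_apply, hz1, hz2, hz3, hz4, hz5, hz6,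
      hz1.symm, hz2.symm, hz3.symm, hz4.symm, hz5.symm, hz6.symm]
  have hV_g4_z01 : g4 z01 = 0 := by
    simp [hg1, hg4, he01, he10, EuclideanSpace.single_apply, hz1, hz2, hz3, hz4, hz5, hz6,
      hz1.symm, hz2.symm, hz3.symm, hz4.symm, hz5.symm, hz6.symm]
  have hV_g4_z10 : g4 z10 = 0 := by
    simp [hg1, hg4, he01, he10, EuclideanSpace.single_apply, hz1, hz2, hz3, hz4, hz5, hz6,
      hz1.symm, hz2.symm, hz3.symm, hz4.symm, hz5.symm, hz6.symm]
  have hV_e01_z01 : e01 z01 = 1 := by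
    simp [hg1, hg4, he01, he10, EuclideanSpace.single_apply, hz1, hz2, hz3, hz4, hz5, hz6,
      hz1.symm, hz2.symm, hz3.symm, hz4.symm, hz5.symm, hz6.symm]
  have hV_e01_z00 : e01 z00 = 0 := by
    simp [hg1, hg4, he01, he10, EuclideanSpace.single_apply, hz1, hz2, hz3, hz4, hz5, hz6,
      hz1.symm, hz2.symm, hz3.symm, hz4.symm, hz5.symm, hz6.symm]
  have hV_e01_z10 : e01 z10 = 0 := by
    simp [hg1, hg4, he01, he10, EuclideanSpace.single_apply, hz1, hz2, hz3, hz4, hz5, hz6,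
      hz1.symm, hz2.symm, hz3.symm, hz4.symm, hz5.symm, hz6.symm]
  have hV_e01_z11 : e01 z11 = 0 := by
    simp [hg1, hg4, he01, he10, EuclideanSpace.single_apply, hz1, hz2, hz3, hz4, hz5, hz6,
      hz1.symm, hz2.symm, hz3.symm, hz4.symm, hz5.symm, hz6.symm]
  have hV_e10_z10 : e10 z10 = 1 := by
    simp [hg1, hg4, he01, he10, EuclideanSpace.single_apply, hz1, hz2, hz3, hz4, hz5, hz6,
      hz1.symm, hz2.symm, hz3.symm, hz4.symm, hz5.symm, hz6.symm]
  have hV_e10_z00 : e10 z00 = 0 := by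
    simp [hg1, hg4, he01, he10, EuclideanSpace.single_apply, hz1, hz2, hz3, hz4, hz5, hz6,
      hz1.symm, hz2.symm, hz3.symm, hz4.symm, hz5.symm, hz6.symm]
  have hV_e10_z01 : e10 z01 = 0 := by
    simp [hg1, hg4, he01, he10, EuclideanSpace.single_apply, hz1, hz2, hz3, hz4, hz5, hz6,
      hz1.symm, hz2.symm, hz3.symm, hz4.symm, hz5.symm, hz6.symm]
  have hV_e10_z11 : e10 z11 = 0 := by
    simp [hg1, hg4, he01, he10, EuclideanSpace.single_apply, hz1, hz2, hz3, hz4, hz5, hz6,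
      hz1.symm, hz2.symm, hz3.symm, hz4.symm, hz5.symm, hz6.symm]
  have hcardE : Module.finrank ℂ (EuclideanSpace ℂ (Fin m × Fin n))
      = Fintype.card (Fin m × Fin n) := finrank_euclideanSpace
  obtain ⟨b, hbv⟩ := horth.exists_orthonormalBasis_extension_of_card_eq hcardE
  have hb1 : b i₁ = g1 := (hbv i₁ (by simp [hsS])).trans hvi₁
  have hbj : b j = e01 := (hbv j (by simp [hsS])).trans hvj
  have hbk : b k = e10 := (hbv k (by simp [hsS])).trans hvk
  have hbl : b l = g4 := (hbv l (by simp [hsS])).trans hvl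
  have hbo := orthonormal_iff_ite.mp b.orthonormal
  have hcne : ((c:ℂ)) ≠ 0 := Complex.ofReal_ne_zero.mpr hcpos.ne'
  have hvan : ∀ i, i ∉ sS → b i z00 = 0 ∧ b i z11 = 0 ∧ b i z01 = 0 ∧ b i z10 = 0 := by
    intro i hi
    have hne : ∀ i', i' ∈ sS → i' ≠ i := fun i' hmem heq => hi (heq ▸ hmem)
    have h01 : b i z01 = 0 := by
      have h := hbo j i
      rw [if_neg (hne j (by simp [hsS]))] at h
      rw [hbj, he01, EuclideanSpace.inner_single_left] at h
      simpa using h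
    have h10 : b i z10 = 0 := by
      have h := hbo k i
      rw [if_neg (hne k (by simp [hsS]))] at h
      rw [hbk, he10, EuclideanSpace.inner_single_left] at h
      simpa using h
    have hsv : (c:ℂ) * (b i z00 + b i z11) = 0 := by
      have h := hbo i₁ i
      rw [if_neg (hne i₁ (by simp [hsS]))] at h
      rw [hb1, hg1] at h
      simp only [inner_smul_left, inner_add_left, EuclideanSpace.inner_single_left,
        Complex.conj_ofReal, _root_.map_one, one_mul] at h
      linear_combination h
    have hdv : (c:ℂ) * (b i z00 - b i z11) = 0 := by
      have h := hbo l i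
      rw [if_neg (hne l (by simp [hsS]))] at h
      rw [hbl, hg4] at h
      simp only [inner_smul_left, inner_sub_left, EuclideanSpace.inner_single_left,
        Complex.conj_ofReal, _root_.map_one, one_mul] at h
      linear_combination h
    have hs0 : b i z00 + b i z11 = 0 := by
      rcases mul_eq_zero.mp hsv with h|h
      · exact absurd h hcne
      · exact h
    have hd0 : b i z00 - b i z11 = 0 := by
      rcases mul_eq_zero.mp hdv with h|h
      · exact absurd h hcne
      · exact h
    refine ⟨by linear_combination (hs0 + hd0) / 2, by linear_combination (hs0 - hd0) / 2,
      h01, h10⟩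
  -- the unitary
  set G : Matrix (Fin m × Fin n) (Fin m × Fin n) ℂ := Matrix.of (fun x i => b i x) with hG
  have hGcol : ∀ x i, G x i = b i x := fun x i => rfl
  have hGu : Gᴴ * G = 1 := by
    ext i i'
    rw [Matrix.mul_apply, Matrix.one_apply]
    have h := hbo i i'
    rw [Aux8.euclid_inner] at h
    simpa [Matrix.conjTranspose_apply, hGcol, Complex.star_def] using h
  have hGu' : G * Gᴴ = 1 := mul_eq_one_comm.mp hGu
  have hcan : ∀ X : Matrix (Fin m × Fin n) (Fin m × Fin n) ℂ, cVᴴ * (cV * X) = X := by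
    intro X
    rw [← Matrix.mul_assoc, h1, one_mul]
  set U : Matrix (Fin m × Fin n) (Fin m × Fin n) ℂ := G * cVᴴ with hU
  have hUU : U * Uᴴ = 1 := by
    rw [hU, Matrix.conjTranspose_mul, Matrix.conjTranspose_conjTranspose, Matrix.mul_assoc,
      hcan]
    exact hGu'
  have hform : U * σ * Uᴴ = G * D * Gᴴ := by
    rw [hU, hspec, Matrix.conjTranspose_mul, Matrix.conjTranspose_conjTranspose]
    simp only [Matrix.mul_assoc]
    rw [hcan, hcan]
  -- separability and contradiction
  have hsep : IsSep (U * σ * Uᴴ) := hcon ρ hρ U hUU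
  rw [hform] at hsep
  set ψ : (Fin m × Fin n) → ℂ := Pi.single z01 1 + Pi.single z10 (-1) with hψ
  have hq := (Aux8.pt_sep_posSemidef hsep).dotProduct_mulVec_nonneg ψ
  have hstar : star ψ = ψ := by
    funext x
    simp only [hψ, Pi.star_apply, Pi.add_apply, Pi.single_apply]
    split_ifs <;> simp
  have hMent : ∀ x y, (G * D * Gᴴ) x y
      = ∑ i, (lam i : ℂ) * (b i x * (starRingEnd ℂ) (b i y)) := by
    intro x y
    rw [Matrix.mul_apply]
    refine Finset.sum_congr rfl fun i _ => ?_
    rw [hD, Matrix.mul_diagonal, Matrix.conjTranspose_apply, hGcol, hGcol,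
      Complex.star_def]
    ring
  have hqv : star ψ ⬝ᵥ (Aux8.pt (G * D * Gᴴ) *ᵥ ψ)
      = Aux8.pt (G * D * Gᴴ) z01 z01 - Aux8.pt (G * D * Gᴴ) z01 z10
        - Aux8.pt (G * D * Gᴴ) z10 z01 + Aux8.pt (G * D * Gᴴ) z10 z10 := by
    rw [hstar]
    simp only [hψ, Matrix.mulVec_add, Matrix.mulVec_single, dotProduct_add,
      add_dotProduct, single_dotProduct, Pi.add_apply, Pi.smul_apply, Matrix.col_apply,
      op_smul_eq_mul]
    ring
  have hp11 : Aux8.pt (G * D * Gᴴ) z01 z01 = (G * D * Gᴴ) z01 z01 := rfl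
  have hp12 : Aux8.pt (G * D * Gᴴ) z01 z10 = (G * D * Gᴴ) z11 z00 := rfl
  have hp21 : Aux8.pt (G * D * Gᴴ) z10 z01 = (G * D * Gᴴ) z00 z11 := rfl
  have hp22 : Aux8.pt (G * D * Gᴴ) z10 z10 = (G * D * Gᴴ) z10 z10 := rfl
  have hval : star ψ ⬝ᵥ (Aux8.pt (G * D * Gᴴ) *ᵥ ψ)
      = ((lam j + lam k + lam l - lam i₁ : ℝ) : ℂ) := by
    rw [hqv, hp11, hp12, hp21, hp22, hMent, hMent, hMent, hMent,
      ← Finset.sum_sub_distrib, ← Finset.sum_sub_distrib, ← Finset.sum_add_distrib]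
    rw [← Finset.sum_subset (Finset.subset_univ ({i₁, j, k, l} : Finset (Fin m × Fin n)))
      (fun x _ hx => ?_)]
    · rw [Finset.sum_insert (by simp [Ne.symm hji, Ne.symm hki, Ne.symm hli]),
        Finset.sum_insert (by simp [Ne.symm hkj, Ne.symm hlj]),
        Finset.sum_insert (by simp [Ne.symm hlk]), Finset.sum_singleton]
      rw [hb1, hbj, hbk, hbl]
      rw [hV_g1_z01, hV_g1_z10, hV_g1_z00, hV_g1_z11, hV_e01_z01, hV_e01_z10,
        hV_e01_z00, hV_e01_z11, hV_e10_z01, hV_e10_z10, hV_e10_z00, hV_e10_z11,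
        hV_g4_z01, hV_g4_z10, hV_g4_z00, hV_g4_z11]
      simp only [Complex.conj_ofReal, map_neg, _root_.map_one, map_zero]
      push_cast
      linear_combination (2 * ((lam l : ℂ) - (lam i₁ : ℂ))) * hc2
    · have hxs : x ∉ sS := by
        simpa [hsS] using hx
      obtain ⟨h00, h11, h01, h10⟩ := hvan x hxs
      rw [h00, h11, h01, h10]
      ring
  rw [hval] at hq
  rw [Complex.zero_le_real] at hq
  linarith

end
end

section
/- Let d ≥ 2 and let Φ be a positive trace-preserving linear map on d×d complex matrices with maximal output purity ‖Φ‖²_{1→2} and minimal output entropy h(Φ). If N ≥ 2 satisfies either N > 8/(d·‖Φ‖²_{1→2} − 1) + 1 (with d·‖Φ‖²_{1→2} > 1), or N > 8·((log d + 1)/(log d − h(Φ)))² + 1 (with h(Φ) < log d), then Φ is not N-tensor-stable absolutely separating; that is, there exist integers m, n ≥ 2 with mn = d^N such that the N-fold tensor power Φ^{⊗N} is not absolutely separating with respect to the bipartition m|n. In fact, for a density matrix ρ maximizing tr((Φ[ρ])²) (respectively minimizing the entropy of Φ[ρ]), the output Φ^{⊗N}[ρ^{⊗N}] = (Φ[ρ])^{⊗N}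 is not absolutely separable with respect to any bipartition m|n of d^N. -/
open Matrix Kronecker BigOperators
open scoped ComplexOrder

noncomputable section


/-- The Kronecker product of a family of `d × d` matrices. -/
def kronPow {N d : ℕ} (A : Fin N → Matrix (Fin d) (Fin d) ℂ) :
    Matrix (Fin N → Fin d) (Fin N → Fin d) ℂ :=
  Matrix.of fun f g => ∏ j, A j (f j) (g j)

/-- `N`-fold tensor power `Φ^{⊗N}` of a linear map on `d × d` matrices. -/
def kronPowMap {d N : ℕ} (Φ : Matrix (Fin d) (Fin d) ℂ →ₗ[ℂ] Matrix (Fin d) (Fin d) ℂ)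
    (X : Matrix (Fin N → Fin d) (Fin N → Fin d) ℂ) :
    Matrix (Fin N → Fin d) (Fin N → Fin d) ℂ :=
  Matrix.of fun f g => ∑ a : Fin N → Fin d, ∑ b : Fin N → Fin d,
    (∏ j, Φ (Matrix.single (a j) (b j) 1) (f j) (g j)) * X a b

/-- Identification of `(ℂ^d)^{⊗N}` with `ℂ^m ⊗ ℂ^n` when `m * n = d ^ N`. -/
def biEquiv (d N m n : ℕ) (h : m * n = d ^ N) : (Fin N → Fin d) ≃ Fin m × Fin n :=
  (finFunctionFinEquiv.trans (finCongr h.symm)).trans finProdFinEquiv.symm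

set_option maxHeartbeats 1000000

namespace Stmt9Aux

variable {κ : Type*} [Fintype κ] [DecidableEq κ]

lemma sum_two (a b : κ) (hab : a ≠ b) (f : κ → ℂ) (hf : ∀ x, x ≠ a → x ≠ b → f x = 0) :
    ∑ x, f x = f a + f b := by
  classical
  rw [← Finset.sum_subset (Finset.subset_univ ({a, b} : Finset κ))]
  · rw [Finset.sum_insert (by simp [hab]), Finset.sum_singleton]
  · intro x _ hx
    simp only [Finset.mem_insert, Finset.mem_singleton, not_or] at hx
    exact hf x hx.1 hx.2

lemma exists_perm {α : Type*} [Fintype α] [DecidableEq α] {k : ℕ} (f g : Fin k → α)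
    (hf : Function.Injective f) (hg : Function.Injective g) :
    ∃ π : Equiv.Perm α, ∀ i, π (f i) = g i := by
  classical
  have hcard : ∀ (f : Fin k → α), Function.Injective f →
      Fintype.card ((Set.range f)ᶜ : Set α) = Fintype.card α - k := by
    intro f hf
    rw [Fintype.card_compl_set, Set.card_range_of_injective hf, Fintype.card_fin]
  let Ef : (Fin k) ⊕ (Fin (Fintype.card α - k)) ≃ α :=
    ((Equiv.ofInjective f hf).sumCongr ((Fintype.equivFinOfCardEq (hcard f hf)).symm)).trans
      (Equiv.Set.sumCompl (Set.range f))
  let Eg : (Fin k) ⊕ (Fin (Fintype.card α - k)) ≃ α :=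
    ((Equiv.ofInjective g hg).sumCongr ((Fintype.equivFinOfCardEq (hcard g hg)).symm)).trans
      (Equiv.Set.sumCompl (Set.range g))
  refine ⟨Ef.symm.trans Eg, fun i => ?_⟩
  have h1 : Ef (Sum.inl i) = f i := by
    simp [Ef, Equiv.Set.sumCompl_apply_inl]
  have h2 : Eg (Sum.inl i) = g i := by
    simp [Eg, Equiv.Set.sumCompl_apply_inl]
  have h3 : Ef.symm (f i) = Sum.inl i := by
    rw [← h1, Equiv.symm_apply_apply]
  simp [Equiv.trans_apply, h3, h2]

lemma kron_psd {ι₁ ι₂ : Type*} [Fintype ι₁] [Fintype ι₂]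
    {A : Matrix ι₁ ι₁ ℂ} {B : Matrix ι₂ ι₂ ℂ} (hA : A.PosSemidef) (hB : B.PosSemidef) :
    (A ⊗ₖ B).PosSemidef := by
  obtain ⟨C, hC⟩ : ∃ C : Matrix _ _ ℂ, _ = star C * C := by
    classical
    open scoped MatrixOrder in exact CStarAlgebra.nonneg_iff_eq_star_mul_self.mp hA.nonneg
  rw [show star C = Cᴴ from rfl] at hC
  subst hC
  obtain ⟨D, hD⟩ : ∃ D : Matrix _ _ ℂ, _ = star D * D := by
    classical
    open scoped MatrixOrder in exact CStarAlgebra.nonneg_iff_eq_star_mul_self.mp hB.nonneg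
  rw [show star D = Dᴴ from rfl] at hD
  subst hD
  have h2 : (C ⊗ₖ D)ᴴ = Cᴴ ⊗ₖ Dᴴ := by
    ext ⟨i, j⟩ ⟨k, l⟩
    simp [Matrix.conjTranspose_apply, Matrix.kroneckerMap_apply, star_mul']
  have h : (Cᴴ * C) ⊗ₖ (Dᴴ * D) = (C ⊗ₖ D)ᴴ * (C ⊗ₖ D) := by
    rw [h2, Matrix.mul_kronecker_mul]
  rw [h]
  exact Matrix.posSemidef_conjTranspose_mul_self _

/-- The core entanglement-witness lemma. -/
lemma core {m n : ℕ} (hm : 2 ≤ m) (hn : 2 ≤ n)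
    (μ : Fin m × Fin n → ℝ) (W : Matrix (Fin m × Fin n) (Fin m × Fin n) ℂ)
    (hW : Wᴴ * W = 1)
    (i₁ a b c : Fin m × Fin n)
    (h1a : i₁ ≠ a) (h1b : i₁ ≠ b) (h1c : i₁ ≠ c)
    (hab : a ≠ b) (hac : a ≠ c) (hbc : b ≠ c)
    (hsum : μ a + μ b + μ c < μ i₁) :
    ¬ IsAbsSep (W * Matrix.diagonal (fun q => (μ q : ℂ)) * Wᴴ) := by
  classical
  intro habs
  set z0m : Fin m := ⟨0, by omega⟩ with hz0m
  set z1m : Fin m := ⟨1, by omega⟩ with hz1m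
  set z0n : Fin n := ⟨0, by omega⟩ with hz0n
  set z1n : Fin n := ⟨1, by omega⟩ with hz1n
  have hmne : z0m ≠ z1m := by simp [hz0m, hz1m, Fin.ext_iff]
  have hnne : z0n ≠ z1n := by simp [hz0n, hz1n, Fin.ext_iff]
  set p00 : Fin m × Fin n := (z0m, z0n) with hp00
  set p01 : Fin m × Fin n := (z0m, z1n) with hp01
  set p10 : Fin m × Fin n := (z1m, z0n) with hp10
  set p11 : Fin m × Fin n := (z1m, z1n) with hp11
  have q01 : p00 ≠ p01 := by simp [hp00, hp01, Prod.ext_iff, hnne]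
  have q02 : p00 ≠ p10 := by simp [hp00, hp10, Prod.ext_iff, hmne]
  have q03 : p00 ≠ p11 := by simp [hp00, hp11, Prod.ext_iff, hmne]
  have q12 : p01 ≠ p10 := by simp [hp01, hp10, Prod.ext_iff, hmne]
  have q13 : p01 ≠ p11 := by simp [hp01, hp11, Prod.ext_iff, hmne]
  have q23 : p10 ≠ p11 := by simp [hp10, hp11, Prod.ext_iff, hnne]
  -- permutation sending i₁ ↦ p00, a ↦ p01, b ↦ p10, c ↦ p11
  obtain ⟨π, hπ⟩ := exists_perm ![i₁, a, b, c] ![p00, p01, p10, p11]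
    (by
      intro x y hxy
      fin_cases x <;> fin_cases y <;> simp_all <;>
        first
          | rfl
          | exact absurd hxy (by tauto)
          | exact absurd hxy.symm (by tauto))
    (by
      intro x y hxy
      fin_cases x <;> fin_cases y <;> simp_all <;>
        first
          | rfl
          | exact absurd hxy (by tauto)
          | exact absurd hxy.symm (by tauto))
  have hπ1 : π i₁ = p00 := hπ 0
  have hπa : π a = p01 := hπ 1
  have hπb : π b = p10 := hπ 2
  have hπc : π c = p11 := hπ 3
  -- the special unitary M
  set s : ℂ := Complex.ofReal ((Real.sqrt 2)⁻¹) with hs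
  have hs2 : s * s = (1/2 : ℂ) := by
    have hr : (Real.sqrt 2)⁻¹ * (Real.sqrt 2)⁻¹ = (2:ℝ)⁻¹ := by
      rw [← mul_inv, Real.mul_self_sqrt (by norm_num : (0:ℝ) ≤ 2)]
    rw [hs, ← Complex.ofReal_mul, hr]
    norm_num
  have hsc : (starRingEnd ℂ) s = s := by rw [hs]; exact Complex.conj_ofReal _
  set ψ : (Fin m × Fin n) → ℂ := fun x => if x = p00 then s else if x = p11 then s else 0
    with hψ
  set ψ' : (Fin m × Fin n) → ℂ := fun x => if x = p00 then s else if x = p11 then -s else 0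
    with hψ'
  set ξ : (Fin m × Fin n) → (Fin m × Fin n) → ℂ :=
    fun q => if q = p00 then ψ else if q = p11 then ψ' else (fun x => if x = q then 1 else 0)
    with hξ
  set M : Matrix (Fin m × Fin n) (Fin m × Fin n) ℂ := Matrix.of fun x q => ξ q x with hM
  have hMM : Mᴴ * M = 1 := by
    ext q q'
    rw [Matrix.mul_apply]
    simp only [Matrix.conjTranspose_apply, Matrix.of_apply, hM, Matrix.one_apply]
    by_cases hq0 : q = p00
    · subst hq0
      by_cases hq'0 : q' = p00
      · subst hq'0
        rw [sum_two p00 p11 q03 _ (by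
          intro x hx1 hx2
          simp [hξ, hψ, q03, Ne.symm q03, hx1, hx2])]
        simp [hξ, hψ, q03.symm, hsc, hs2]
        norm_num
      · by_cases hq'1 : q' = p11
        · subst hq'1
          rw [sum_two p00 p11 q03 _ (by
            intro x hx1 hx2
            simp [hξ, hψ, hψ', q03, Ne.symm q03, hx1, hx2])]
          simp [hξ, hψ, hψ', q03.symm, q03, hsc, hs2]
        · rw [Finset.sum_eq_single q' (by
            intro x _ hx
            simp [hξ, hq'0, hq'1, hx]) (by simp)]
          simp [hξ, hψ, hq'0, hq'1, Ne.symm hq'0, Ne.symm hq'1]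
    · by_cases hq1 : q = p11
      · subst hq1
        by_cases hq'0 : q' = p00
        · subst hq'0
          rw [sum_two p00 p11 q03 _ (by
            intro x hx1 hx2
            simp [hξ, hψ, hψ', q03, Ne.symm q03, hx1, hx2])]
          simp [hξ, hψ, hψ', q03.symm, q03, hsc, hs2]
        · by_cases hq'1 : q' = p11
          · subst hq'1
            rw [sum_two p00 p11 q03 _ (by
              intro x hx1 hx2
              simp [hξ, hψ', q03, Ne.symm q03, hx1, hx2])]
            simp [hξ, hψ', q03.symm, q03, hsc, hs2]
            try norm_num
          · rw [Finset.sum_eq_single q' (by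
              intro x _ hx
              simp [hξ, hq'0, hq'1, hx]) (by simp)]
            simp [hξ, hψ', hq'0, hq'1, Ne.symm hq'0, Ne.symm hq'1, q03.symm]
      · by_cases hq'0 : q' = p00
        · subst hq'0
          rw [Finset.sum_eq_single q (by
            intro x _ hx
            simp [hξ, hq0, hq1, hx]) (by simp)]
          simp [hξ, hψ, hq0, hq1, Ne.symm hq0, Ne.symm hq1]
        · by_cases hq'1 : q' = p11
          · subst hq'1
            rw [Finset.sum_eq_single q (by
              intro x _ hx
              simp [hξ, hq0, hq1, hx]) (by simp)]
            simp [hξ, hψ', hq0, hq1, Ne.symm hq0, Ne.symm hq1, q03.symm]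
          · rw [Finset.sum_eq_single q (by
              intro x _ hx
              simp [hξ, hq0, hq1, hx]) (by simp)]
            by_cases h : q = q'
            · subst h; simp [hξ, hq0, hq1]
            · simp [hξ, hq0, hq1, hq'0, hq'1, h]
  -- build the unitary U and the rotated state
  set D' : Matrix (Fin m × Fin n) (Fin m × Fin n) ℂ := Matrix.diagonal (fun q => (μ q : ℂ))
    with hD'
  set V : Matrix (Fin m × Fin n) (Fin m × Fin n) ℂ := M.submatrix id ⇑π with hV
  have hMM' : M * Mᴴ = 1 := mul_eq_one_comm.mp hMM
  have hVc : Vᴴ = Mᴴ.submatrix ⇑π id := by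
    rw [hV, Matrix.conjTranspose_submatrix]
  have hVV : V * Vᴴ = 1 := by
    rw [hV, hVc, Matrix.submatrix_mul_equiv M Mᴴ id π id, hMM', Matrix.submatrix_id_id]
  have hWW' : W * Wᴴ = 1 := mul_eq_one_comm.mp hW
  set U := V * Wᴴ with hU
  have hUU : U * Uᴴ = 1 := by
    rw [hU, Matrix.conjTranspose_mul, Matrix.conjTranspose_conjTranspose,
      Matrix.mul_assoc, ← Matrix.mul_assoc Wᴴ W Vᴴ, hW, Matrix.one_mul, hVV]
  have hconj : U * (W * D' * Wᴴ) * Uᴴ = V * D' * Vᴴ := by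
    rw [hU, Matrix.conjTranspose_mul, Matrix.conjTranspose_conjTranspose]
    calc V * Wᴴ * (W * D' * Wᴴ) * (W * Vᴴ)
        = V * ((Wᴴ * W) * (D' * ((Wᴴ * W) * Vᴴ))) := by
          simp only [Matrix.mul_assoc]
      _ = V * D' * Vᴴ := by rw [hW, Matrix.one_mul, Matrix.one_mul, Matrix.mul_assoc]
  have hsep := habs U hUU
  rw [hconj] at hsep
  -- entries of the rotated state
  have hrho : ∀ x y, (V * D' * Vᴴ) x y
      = ∑ j, (μ j : ℂ) * (ξ (π j) x * (starRingEnd ℂ) (ξ (π j) y)) := by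
    intro x y
    rw [Matrix.mul_apply]
    refine Finset.sum_congr rfl fun j _ => ?_
    simp only [hD', Matrix.mul_diagonal, Matrix.conjTranspose_apply, hV, Matrix.submatrix_apply,
      id_eq, hM, Matrix.of_apply, Complex.star_def]
    ring
  set γ : (Fin m × Fin n) → ℂ := fun q =>
    ξ q p01 * (starRingEnd ℂ) (ξ q p01) + ξ q p10 * (starRingEnd ℂ) (ξ q p10)
      - ξ q p00 * (starRingEnd ℂ) (ξ q p11) - ξ q p11 * (starRingEnd ℂ) (ξ q p00) with hγ
  have hcomb : (V * D' * Vᴴ) p01 p01 + (V * D' * Vᴴ) p10 p10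
      - (V * D' * Vᴴ) p00 p11 - (V * D' * Vᴴ) p11 p00 = ∑ j, (μ j : ℂ) * γ (π j) := by
    rw [hrho, hrho, hrho, hrho, ← Finset.sum_add_distrib, ← Finset.sum_sub_distrib,
      ← Finset.sum_sub_distrib]
    refine Finset.sum_congr rfl fun j _ => ?_
    simp only [hγ]
    ring
  have hsumpi : ∑ j, (μ j : ℂ) * γ (π j) = ∑ q, (μ (π.symm q) : ℂ) * γ q := by
    rw [← Equiv.sum_comp π (fun q => (μ (π.symm q) : ℂ) * γ q)]
    exact Finset.sum_congr rfl fun j _ => by rw [Equiv.symm_apply_apply]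
  have x00 : ∀ y, ξ p00 y = ψ y := fun y => by simp [hξ]
  have x11 : ∀ y, ξ p11 y = ψ' y := fun y => by simp [hξ, Ne.symm q03]
  have xoth : ∀ q, q ≠ p00 → q ≠ p11 → ∀ y, ξ q y = if y = q then 1 else 0 :=
    fun q h0 h1 y => by simp [hξ, h0, h1]
  have w01 : ψ p01 = 0 := by simp [hψ, Ne.symm q01, q13]
  have w10 : ψ p10 = 0 := by simp [hψ, Ne.symm q02, q23]
  have w00 : ψ p00 = s := by simp [hψ]
  have w11 : ψ p11 = s := by simp [hψ, Ne.symm q03]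
  have w01' : ψ' p01 = 0 := by simp [hψ', Ne.symm q01, q13]
  have w10' : ψ' p10 = 0 := by simp [hψ', Ne.symm q02, q23]
  have w00' : ψ' p00 = s := by simp [hψ']
  have w11' : ψ' p11 = -s := by simp [hψ', Ne.symm q03]
  have hγ00 : γ p00 = -1 := by
    simp only [hγ, x00]
    rw [w01, w10, w00, w11]
    simp [hsc]
    linear_combination (-2 : ℂ) * hs2
  have hγ11 : γ p11 = 1 := by
    simp only [hγ, x11]
    rw [w01', w10', w00', w11']
    simp [hsc]
    linear_combination (2 : ℂ) * hs2
  have hγ01 : γ p01 = 1 := by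
    have xq := xoth p01 (Ne.symm q01) q13
    simp only [hγ, xq]
    simp [q01, Ne.symm q12, Ne.symm q13]
  have hγ10 : γ p10 = 1 := by
    have xq := xoth p10 (Ne.symm q02) q23
    simp only [hγ, xq]
    simp [q12, q02, Ne.symm q23]
  have hγ0 : ∀ q, q ≠ p00 → q ≠ p01 → q ≠ p10 → q ≠ p11 → γ q = 0 := by
    intro q h0 h1 h2 h3
    have xq := xoth q h0 h3
    simp only [hγ, xq]
    simp [Ne.symm h0, Ne.symm h1, Ne.symm h2, Ne.symm h3]
  have hFval : ∑ q, (μ (π.symm q) : ℂ) * γ q = ((μ a + μ b + μ c - μ i₁ : ℝ) : ℂ) := by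
    rw [← Finset.sum_subset (Finset.subset_univ ({p00, p01, p10, p11} : Finset _)) (by
      intro q _ hq
      simp only [Finset.mem_insert, Finset.mem_singleton, not_or] at hq
      rw [hγ0 q hq.1 hq.2.1 hq.2.2.1 hq.2.2.2, mul_zero])]
    rw [Finset.sum_insert (by simp [q01, q02, q03]), Finset.sum_insert (by simp [q12, q13]),
      Finset.sum_insert (by simp [q23]), Finset.sum_singleton]
    have e1 : π.symm p00 = i₁ := by rw [← hπ1, Equiv.symm_apply_apply]
    have e2 : π.symm p01 = a := by rw [← hπa, Equiv.symm_apply_apply]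
    have e3 : π.symm p10 = b := by rw [← hπb, Equiv.symm_apply_apply]
    have e4 : π.symm p11 = c := by rw [← hπc, Equiv.symm_apply_apply]
    rw [e1, e2, e3, e4, hγ00, hγ01, hγ10, hγ11]
    push_cast
    ring
  obtain ⟨k, p, A, B, hp0, hp1, hA, hB, hrep⟩ := hsep
  have hterm : ∀ i : Fin k, 0 ≤ ((A i ⊗ₖ B i) p01 p01 + (A i ⊗ₖ B i) p10 p10
      - (A i ⊗ₖ B i) p00 p11 - (A i ⊗ₖ B i) p11 p00).re := by
    intro i
    have hk : ((A i)ᵀ ⊗ₖ (B i)).PosSemidef := kron_psd ((hA i).1.transpose) (hB i).1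
    set z : (Fin m × Fin n) → ℂ := fun x => if x = p01 then 1 else if x = p10 then -1 else 0
      with hz
    have h0 := hk.dotProduct_mulVec_nonneg z
    have hre : 0 ≤ (dotProduct (star z) (((A i)ᵀ ⊗ₖ (B i)) *ᵥ z)).re := by
      have h1 := (Complex.le_def.mp h0).1
      simpa using h1
    have hmv : ∀ x, (((A i)ᵀ ⊗ₖ (B i)) *ᵥ z) x
        = ((A i)ᵀ ⊗ₖ (B i)) x p01 - ((A i)ᵀ ⊗ₖ (B i)) x p10 := by
      intro x
      show ∑ y, ((A i)ᵀ ⊗ₖ (B i)) x y * z y = _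
      rw [sum_two p01 p10 q12 _ (by
        intro y hy1 hy2
        simp [hz, hy1, hy2])]
      simp [hz, q12, Ne.symm q12]
      ring
    have hdot : dotProduct (star z) (((A i)ᵀ ⊗ₖ (B i)) *ᵥ z)
        = (A i ⊗ₖ B i) p01 p01 + (A i ⊗ₖ B i) p10 p10
          - (A i ⊗ₖ B i) p00 p11 - (A i ⊗ₖ B i) p11 p00 := by
      show ∑ x, star z x * (((A i)ᵀ ⊗ₖ (B i)) *ᵥ z) x = _
      rw [sum_two p01 p10 q12 _ (by
        intro x hx1 hx2
        simp [hz, hx1, hx2])]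
      rw [hmv, hmv]
      simp [hz, q12, Ne.symm q12, hp00, hp01, hp10, hp11, Ne.symm hmne]
      ring
    rw [← hdot]
    exact hre
  have hcombination : ((μ a + μ b + μ c - μ i₁ : ℝ) : ℂ)
      = ∑ i : Fin k, (p i : ℂ) * ((A i ⊗ₖ B i) p01 p01 + (A i ⊗ₖ B i) p10 p10
          - (A i ⊗ₖ B i) p00 p11 - (A i ⊗ₖ B i) p11 p00) := by
    rw [← hFval, ← hsumpi, ← hcomb, hrep]
    simp only [Matrix.sum_apply, Matrix.smul_apply, smul_eq_mul]
    rw [← Finset.sum_add_distrib, ← Finset.sum_sub_distrib, ← Finset.sum_sub_distrib]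
    exact Finset.sum_congr rfl fun i _ => by ring
  have h0le : 0 ≤ ((μ a + μ b + μ c - μ i₁ : ℝ) : ℂ).re := by
    rw [hcombination, Complex.re_sum]
    refine Finset.sum_nonneg fun i _ => ?_
    rw [Complex.re_ofReal_mul]
    exact mul_nonneg (hp0 i) (hterm i)
  rw [Complex.ofReal_re] at h0le
  linarith

/-- Rayleigh-type bound plus the "three smallest eigenvalues" selection. -/
lemma eigen_data {ι : Type*} [Fintype ι] [DecidableEq ι] (σ : Matrix ι ι ℂ) (hσ : σ.PosSemidef) (htr : σ.trace = 1)
    (hcard : 4 ≤ Fintype.card ι)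
    (v : ι → ℂ) (hv : dotProduct (star v) v = 1)
    (hray : 3 < (dotProduct (star v) (σ *ᵥ v)).re * ((Fintype.card ι : ℝ) + 2)) :
    ∃ (ev : ι → ℝ) (W : Matrix ι ι ℂ), Wᴴ * W = 1 ∧
      σ = W * Matrix.diagonal (fun i => (ev i : ℂ)) * Wᴴ ∧
      ∃ i₁ a b c : ι, i₁ ≠ a ∧ i₁ ≠ b ∧ i₁ ≠ c ∧ a ≠ b ∧ a ≠ c ∧ b ≠ c ∧
        ev a + ev b + ev c < ev i₁ := by
  classical
  have hH := hσ.1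
  set ev := hH.eigenvalues with hev
  set W : Matrix ι ι ℂ := (hH.eigenvectorUnitary : Matrix ι ι ℂ) with hWdef
  have hWmem : W ∈ Matrix.unitaryGroup ι ℂ := hH.eigenvectorUnitary.2
  have hWW : Wᴴ * W = 1 := by
    rw [← Matrix.star_eq_conjTranspose]
    exact (Unitary.mem_iff.mp hWmem).1
  have hWW' : W * Wᴴ = 1 := mul_eq_one_comm.mp hWW
  have hspec : σ = W * Matrix.diagonal (fun i => (ev i : ℂ)) * Wᴴ := by
    have := hH.spectral_theorem
    rw [Unitary.conjStarAlgAut_apply] at this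
    exact this
  refine ⟨ev, W, hWW, hspec, ?_⟩
  -- Rayleigh bound
  set u := Wᴴ *ᵥ v with hu
  have husq : ∀ i, ((starRingEnd ℂ) (u i) * u i) = (Complex.normSq (u i) : ℂ) := fun i => by
    rw [← Complex.normSq_eq_conj_mul_self]
  have hq : dotProduct (star v) (σ *ᵥ v)
      = ∑ i, (ev i : ℂ) * (Complex.normSq (u i) : ℂ) := by
    rw [hspec, ← Matrix.mulVec_mulVec, ← Matrix.mulVec_mulVec, dotProduct_mulVec]
    have hst : star v ᵥ* W = star u := by
      rw [hu, Matrix.star_mulVec, Matrix.conjTranspose_conjTranspose]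
    rw [hst]
    rw [dotProduct]
    refine Finset.sum_congr rfl fun i _ => ?_
    rw [Matrix.mulVec_diagonal]
    simp only [Pi.star_apply, Complex.star_def]
    rw [← husq i]
    ring
  have hnorm : ∑ i, (Complex.normSq (u i) : ℝ) = 1 := by
    have h1 : dotProduct (star u) u = 1 := by
      rw [hu, Matrix.star_mulVec, Matrix.conjTranspose_conjTranspose,
        ← dotProduct_mulVec, Matrix.mulVec_mulVec, hWW', Matrix.one_mulVec, hv]
    have h2 : dotProduct (star u) u = ∑ i, (Complex.normSq (u i) : ℂ) := by
      rw [dotProduct]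
      refine Finset.sum_congr rfl fun i _ => ?_
      simp only [Pi.star_apply, Complex.star_def]
      exact husq i
    rw [h2] at h1
    have := congrArg Complex.re h1
    simpa [Complex.re_sum] using this
  have hre : (dotProduct (star v) (σ *ᵥ v)).re = ∑ i, ev i * Complex.normSq (u i) := by
    rw [hq, Complex.re_sum]
    refine Finset.sum_congr rfl fun i _ => ?_
    rw [← Complex.ofReal_mul]
    exact Complex.ofReal_re _
  -- top eigenvalue index
  have hne : (Finset.univ : Finset ι).Nonempty := by
    rw [← Finset.card_pos, Finset.card_univ]
    omega
  obtain ⟨i₁, -, hi₁⟩ := Finset.exists_max_image Finset.univ ev hne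
  have hray1 : (dotProduct (star v) (σ *ᵥ v)).re ≤ ev i₁ := by
    rw [hre]
    calc ∑ i, ev i * Complex.normSq (u i) ≤ ∑ i, ev i₁ * Complex.normSq (u i) := by
          refine Finset.sum_le_sum fun i _ => ?_
          exact mul_le_mul_of_nonneg_right (hi₁ i (Finset.mem_univ i)) (Complex.normSq_nonneg _)
      _ = ev i₁ := by rw [← Finset.mul_sum, hnorm, mul_one]
  have hbig : 3 < ev i₁ * ((Fintype.card ι : ℝ) + 2) := by
    have hpos : (0:ℝ) < (Fintype.card ι : ℝ) + 2 := by positivity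
    nlinarith [hray, hray1]
  -- eigenvalues: nonneg, sum to 1
  have hev0 : ∀ i, 0 ≤ ev i := hσ.eigenvalues_nonneg
  have hsum1 : ∑ i, ev i = 1 := by
    have h1 : σ.trace = ∑ i, (ev i : ℂ) := by
      rw [hspec, Matrix.trace_mul_comm, ← Matrix.mul_assoc, hWW, Matrix.one_mul,
        Matrix.trace_diagonal]
    rw [htr] at h1
    have := congrArg Complex.re h1.symm
    simpa [Complex.re_sum] using this
  -- three smallest among the rest
  set s : Finset ι := Finset.univ.erase i₁ with hsdef
  have hscard : s.card = Fintype.card ι - 1 := by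
    rw [hsdef, Finset.card_erase_of_mem (Finset.mem_univ i₁), Finset.card_univ]
  have hs3 : 3 ≤ s.card := by omega
  obtain ⟨T, hTmem, hTmin⟩ := Finset.exists_min_image (s.powersetCard 3)
    (fun T => ∑ x ∈ T, ev x) (Finset.powersetCard_nonempty.2 hs3)
  rw [Finset.mem_powersetCard] at hTmem
  obtain ⟨hTs, hTcard⟩ := hTmem
  have hkey : ∀ y ∈ s \ T, ∑ x ∈ T, ev x ≤ 3 * ev y := by
    intro y hy
    rw [Finset.mem_sdiff] at hy
    have hxy : ∀ x ∈ T, ev x ≤ ev y := by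
      intro x hx
      by_contra hlt
      push_neg at hlt
      have hT' : insert y (T.erase x) ∈ s.powersetCard 3 := by
        rw [Finset.mem_powersetCard]
        constructor
        · intro z hz
          rw [Finset.mem_insert] at hz
          rcases hz with rfl | hz
          · exact hy.1
          · exact hTs (Finset.erase_subset _ _ hz)
        · rw [Finset.card_insert_of_notMem (fun hc => hy.2 (Finset.erase_subset _ _ hc)),
            Finset.card_erase_of_mem hx, hTcard]
      have hs' := hTmin _ hT'
      rw [Finset.sum_insert (fun hc => hy.2 (Finset.erase_subset _ _ hc))] at hs'
      have herase : ∑ z ∈ T.erase x, ev z = (∑ z ∈ T, ev z) - ev x := by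
        rw [← Finset.sum_erase_add T ev hx]
        ring
      rw [herase] at hs'
      linarith
    calc ∑ x ∈ T, ev x ≤ ∑ _x ∈ T, ev y := Finset.sum_le_sum hxy
      _ = 3 * ev y := by rw [Finset.sum_const, hTcard]; ring
  have hTbound : ((s.card : ℝ)) * (∑ x ∈ T, ev x) ≤ 3 * ∑ x ∈ s, ev x := by
    have h1 : ∑ _y ∈ s \ T, (∑ x ∈ T, ev x) ≤ ∑ y ∈ s \ T, 3 * ev y :=
      Finset.sum_le_sum hkey
    rw [Finset.sum_const] at h1
    have hc : (s \ T).card = s.card - 3 := by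
      rw [Finset.card_sdiff_of_subset hTs, hTcard]
    have hsplit : ∑ x ∈ s, ev x = (∑ x ∈ s \ T, ev x) + ∑ x ∈ T, ev x := by
      rw [Finset.sum_sdiff hTs]
    have hc3 : 3 ≤ s.card := hs3
    have hcast : ((s \ T).card : ℝ) = (s.card : ℝ) - 3 := by
      rw [hc]
      push_cast [Nat.cast_sub hc3]
      ring
    have h2 : ((s \ T).card : ℝ) * (∑ x ∈ T, ev x) ≤ 3 * ∑ y ∈ s \ T, ev y := by
      simpa [nsmul_eq_mul, Finset.mul_sum] using h1
    rw [hcast] at h2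
    have hexp : ((s.card : ℝ)) * (∑ x ∈ T, ev x)
        = ((s.card : ℝ) - 3) * (∑ x ∈ T, ev x) + 3 * (∑ x ∈ T, ev x) := by ring
    linarith [h2, hsplit, hexp]
  have hssum : ∑ x ∈ s, ev x = 1 - ev i₁ := by
    have := Finset.sum_erase_add Finset.univ ev (Finset.mem_univ i₁)
    rw [hsdef]
    rw [← hsum1]
    linarith [this]
  obtain ⟨a, b, c, hab, hac, hbc, hTeq⟩ := Finset.card_eq_three.mp hTcard
  have hTa : a ∈ T := by rw [hTeq]; simp
  have hTb : b ∈ T := by rw [hTeq]; simp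
  have hTc : c ∈ T := by rw [hTeq]; simp
  have hia : i₁ ≠ a := Ne.symm (Finset.mem_erase.mp (hTs hTa)).1
  have hib : i₁ ≠ b := Ne.symm (Finset.mem_erase.mp (hTs hTb)).1
  have hic : i₁ ≠ c := Ne.symm (Finset.mem_erase.mp (hTs hTc)).1
  have hTsum : ∑ x ∈ T, ev x = ev a + ev b + ev c := by
    rw [hTeq, Finset.sum_insert (by simp [hab, hac]), Finset.sum_insert (by simp [hbc]),
      Finset.sum_singleton]
    ring
  refine ⟨i₁, a, b, c, hia, hib, hic, hab, hac, hbc, ?_⟩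
  rw [hTsum] at hTbound hTmin
  rw [hssum] at hTbound
  rw [hscard] at hTbound
  have hcast2 : ((Fintype.card ι - 1 : ℕ) : ℝ) = (Fintype.card ι : ℝ) - 1 := by
    push_cast [Nat.cast_sub (by omega : 1 ≤ Fintype.card ι)]
    ring
  rw [hcast2] at hTbound
  have hDpos : (4:ℝ) ≤ (Fintype.card ι : ℝ) := by exact_mod_cast hcard
  have hD1 : (0:ℝ) < (Fintype.card ι : ℝ) - 1 := by linarith
  have h5 : 3 - 3 * ev i₁ < ((Fintype.card ι : ℝ) - 1) * ev i₁ := by nlinarith [hbig]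
  have h4 : ((Fintype.card ι : ℝ) - 1) * (ev a + ev b + ev c)
      < ((Fintype.card ι : ℝ) - 1) * ev i₁ := by linarith [hTbound, h5]
  exact (mul_lt_mul_iff_right₀ hD1).mp h4

/-- The reindex bridge. -/
lemma not_absSep {ι : Type*} [Fintype ι] [DecidableEq ι] {m n : ℕ} (hm : 2 ≤ m) (hn : 2 ≤ n)
    (e : ι ≃ Fin m × Fin n)
    (σ : Matrix ι ι ℂ) (hσ : σ.PosSemidef) (htr : σ.trace = 1)
    (v : ι → ℂ) (hv : dotProduct (star v) v = 1)
    (hray : 3 < (dotProduct (star v) (σ *ᵥ v)).re * ((Fintype.card ι : ℝ) + 2)) :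
    ¬ IsAbsSep ((Matrix.reindex e e) σ) := by
  classical
  have hcard : Fintype.card ι = m * n := by
    rw [Fintype.card_congr e, Fintype.card_prod, Fintype.card_fin, Fintype.card_fin]
  have hcard4 : 4 ≤ Fintype.card ι := by
    rw [hcard]; nlinarith
  obtain ⟨ev, W, hWW, hspec, i₁, a, b, c, h1a, h1b, h1c, hab, hac, hbc, hsum⟩ :=
    eigen_data σ hσ htr hcard4 v hv hray
  set W' : Matrix (Fin m × Fin n) (Fin m × Fin n) ℂ := (Matrix.reindex e e) W with hW'
  have hdiag : (Matrix.diagonal (fun i => (ev i : ℂ))).submatrix ⇑e.symm ⇑e.symm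
      = Matrix.diagonal (fun q => (ev (e.symm q) : ℂ)) := by
    rw [Matrix.submatrix_diagonal_equiv]
    rfl
  have hre : (Matrix.reindex e e) σ
      = W' * Matrix.diagonal (fun q => (ev (e.symm q) : ℂ)) * W'ᴴ := by
    rw [hspec, hW']
    simp only [Matrix.reindex_apply]
    rw [← hdiag, Matrix.conjTranspose_submatrix,
      Matrix.submatrix_mul_equiv W _ e.symm e.symm e.symm,
      Matrix.submatrix_mul_equiv _ Wᴴ e.symm e.symm e.symm]
  have hWW' : W'ᴴ * W' = 1 := by
    rw [hW', Matrix.reindex_apply, Matrix.conjTranspose_submatrix,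
      Matrix.submatrix_mul_equiv Wᴴ W e.symm e.symm e.symm, hWW, Matrix.submatrix_one_equiv]
  rw [hre]
  have hμ : ∀ x : ι, ev (e.symm (e x)) = ev x := fun x => by rw [Equiv.symm_apply_apply]
  refine core hm hn (fun q => ev (e.symm q)) W' hWW' (e i₁) (e a) (e b) (e c)
    (fun h => h1a (e.injective h)) (fun h => h1b (e.injective h)) (fun h => h1c (e.injective h))
    (fun h => hab (e.injective h)) (fun h => hac (e.injective h)) (fun h => hbc (e.injective h))
    ?_
  simpa using hsum

/-- Kronecker power of a PSD matrix is PSD. -/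
lemma kronPow_psd {N d : ℕ} {τ : Matrix (Fin d) (Fin d) ℂ} (hτ : τ.PosSemidef) :
    (kronPow (fun _ : Fin N => τ)).PosSemidef := by
  obtain ⟨C, hC⟩ : ∃ C : Matrix _ _ ℂ, _ = star C * C := by
    classical
    open scoped MatrixOrder in exact CStarAlgebra.nonneg_iff_eq_star_mul_self.mp hτ.nonneg
  rw [show star C = Cᴴ from rfl] at hC
  subst hC
  have h : kronPow (fun _ : Fin N => Cᴴ * C)
      = (kronPow (fun _ : Fin N => C))ᴴ * (kronPow (fun _ : Fin N => C)) := by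
    ext f g
    rw [Matrix.mul_apply]
    simp only [kronPow, Matrix.of_apply, Matrix.conjTranspose_apply, Matrix.mul_apply]
    rw [Finset.prod_univ_sum]
    rw [Fintype.piFinset_univ]
    refine Finset.sum_congr rfl fun x _ => ?_
    rw [star_prod, ← Finset.prod_mul_distrib]
  rw [h]
  exact Matrix.posSemidef_conjTranspose_mul_self _

lemma kronPow_trace {N d : ℕ} (A : Fin N → Matrix (Fin d) (Fin d) ℂ) :
    (kronPow A).trace = ∏ j, (A j).trace := by
  simp only [Matrix.trace, Matrix.diag, kronPow, Matrix.of_apply]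
  rw [Finset.prod_univ_sum, Fintype.piFinset_univ]

lemma kronPow_vec {N d : ℕ} (τ : Matrix (Fin d) (Fin d) ℂ) (u : Fin d → ℂ) (μ₁ : ℝ)
    (hu : τ *ᵥ u = (μ₁ : ℂ) • u) (hnu : dotProduct (star u) u = 1) :
    (dotProduct (star (fun f : Fin N → Fin d => ∏ j, u (f j)))
        ((fun f : Fin N → Fin d => ∏ j, u (f j)) : (Fin N → Fin d) → ℂ) = 1)
    ∧ dotProduct (star (fun f : Fin N → Fin d => ∏ j, u (f j)))
        ((kronPow (fun _ : Fin N => τ)) *ᵥ (fun f => ∏ j, u (f j)))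
      = ((μ₁ : ℂ)) ^ N := by
  classical
  set v : (Fin N → Fin d) → ℂ := fun f => ∏ j, u (f j) with hv
  have h1 : dotProduct (star v) v = 1 := by
    rw [dotProduct]
    have : ∀ f : Fin N → Fin d, star v f * v f = ∏ j, (star (u (f j)) * u (f j)) := by
      intro f
      rw [Pi.star_apply, hv, star_prod, ← Finset.prod_mul_distrib]
    rw [Finset.sum_congr rfl fun f _ => this f]
    rw [← Fintype.piFinset_univ]
    have hps : (∏ _j : Fin N, ∑ y : Fin d, star (u y) * u y)
        = ∑ f ∈ Fintype.piFinset (fun _ : Fin N => (Finset.univ : Finset (Fin d))),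
            ∏ j, star (u (f j)) * u (f j) := Finset.prod_univ_sum _ _
    rw [← hps]
    have hnu' : ∑ y : Fin d, star (u y) * u y = 1 := hnu
    rw [Finset.prod_congr rfl fun j _ => hnu', Finset.prod_const_one]
  have h2 : (kronPow (fun _ : Fin N => τ)) *ᵥ v = ((μ₁ : ℂ) ^ N) • v := by
    funext f
    rw [Matrix.mulVec, dotProduct]
    have hterm : ∀ g : Fin N → Fin d, kronPow (fun _ : Fin N => τ) f g * v g
        = ∏ j, (τ (f j) (g j) * u (g j)) := by
      intro g
      rw [kronPow, Matrix.of_apply, hv, ← Finset.prod_mul_distrib]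
    rw [Finset.sum_congr rfl fun g _ => hterm g]
    rw [← Fintype.piFinset_univ]
    have hps2 : (∏ j : Fin N, ∑ y : Fin d, τ (f j) y * u y)
        = ∑ g ∈ Fintype.piFinset (fun _ : Fin N => (Finset.univ : Finset (Fin d))),
            ∏ j, τ (f j) (g j) * u (g j) := Finset.prod_univ_sum _ _
    rw [← hps2]
    have hfac : ∀ j : Fin N, ∑ i : Fin d, τ (f j) i * u i = (μ₁ : ℂ) * u (f j) := by
      intro j
      have := congrFun hu (f j)
      rw [Matrix.mulVec, dotProduct] at this
      rw [this]
      simp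
    rw [Finset.prod_congr rfl fun j _ => hfac j, Finset.prod_mul_distrib,
      Finset.prod_const, Finset.card_univ, Fintype.card_fin]
    simp [hv]
  constructor
  · exact h1
  · rw [h2, dotProduct_smul, h1, smul_eq_mul, mul_one]

/-- Top eigenvalue data of a density matrix. -/
lemma top_eigen {d : ℕ} (τ : Matrix (Fin d) (Fin d) ℂ) (hτ : τ.PosSemidef)
    (htr : τ.trace = 1) :
    ∃ (u : Fin d → ℂ) (μ₁ : ℝ),
      dotProduct (star u) u = 1 ∧ τ *ᵥ u = (μ₁ : ℂ) • u ∧ 0 < μ₁ ∧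
      ((τ * τ).trace).re ≤ μ₁ ∧
      Real.exp (∑ i, (hτ.1.eigenvalues i * Real.log (hτ.1.eigenvalues i))) ≤ μ₁ := by
  classical
  have hH := hτ.1
  set ev := hH.eigenvalues with hev
  set W : Matrix (Fin d) (Fin d) ℂ := (hH.eigenvectorUnitary : Matrix (Fin d) (Fin d) ℂ)
    with hWdef
  have hWmem : W ∈ Matrix.unitaryGroup (Fin d) ℂ := hH.eigenvectorUnitary.2
  have hWW : Wᴴ * W = 1 := by
    rw [← Matrix.star_eq_conjTranspose]
    exact (Unitary.mem_iff.mp hWmem).1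
  have hWW' : W * Wᴴ = 1 := mul_eq_one_comm.mp hWW
  have hspec : τ = W * Matrix.diagonal (fun i => (ev i : ℂ)) * Wᴴ := by
    have := hH.spectral_theorem
    rw [Unitary.conjStarAlgAut_apply] at this
    exact this
  have hev0 : ∀ i, 0 ≤ ev i := hτ.eigenvalues_nonneg
  have hsum1 : ∑ i, ev i = 1 := by
    have h1 : τ.trace = ∑ i, (ev i : ℂ) := by
      rw [hspec, Matrix.trace_mul_comm, ← Matrix.mul_assoc, hWW, Matrix.one_mul,
        Matrix.trace_diagonal]
    rw [htr] at h1
    have := congrArg Complex.re h1.symm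
    simpa [Complex.re_sum] using this
  have hne : (Finset.univ : Finset (Fin d)).Nonempty := by
    by_contra hc
    rw [Finset.not_nonempty_iff_eq_empty] at hc
    rw [hc, Finset.sum_empty] at hsum1
    norm_num at hsum1
  obtain ⟨j₁, -, hj₁⟩ := Finset.exists_max_image Finset.univ ev hne
  have hj₁' : ∀ i, ev i ≤ ev j₁ := fun i => hj₁ i (Finset.mem_univ i)
  set u : Fin d → ℂ := fun x => W x j₁ with hudef
  have hunit : dotProduct (star u) u = 1 := by
    have h2 : dotProduct (star u) u = ∑ x, Wᴴ j₁ x * W x j₁ := by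
      rw [dotProduct]
      exact Finset.sum_congr rfl fun x _ => by
        simp [hudef, Matrix.conjTranspose_apply]
    rw [h2, ← Matrix.mul_apply, hWW, Matrix.one_apply_eq]
  have hTW : τ * W = W * Matrix.diagonal (fun i => (ev i : ℂ)) := by
    rw [hspec, Matrix.mul_assoc (W * Matrix.diagonal (fun i => (ev i : ℂ))) Wᴴ W, hWW,
      Matrix.mul_one]
  have heig : τ *ᵥ u = ((ev j₁ : ℝ) : ℂ) • u := by
    funext x
    have h3 : (τ *ᵥ u) x = (τ * W) x j₁ := by
      rw [Matrix.mul_apply, Matrix.mulVec, dotProduct]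
    rw [h3, hTW, Matrix.mul_diagonal]
    simp [hudef]
    ring
  have hpos : 0 < ev j₁ := by
    by_contra hc
    push_neg at hc
    have : ∑ i, ev i ≤ 0 := Finset.sum_nonpos fun i _ => le_trans (hj₁' i) hc
    linarith
  refine ⟨u, ev j₁, hunit, heig, hpos, ?_, ?_⟩
  · -- purity bound
    have hmulW : ∀ X Y : Matrix (Fin d) (Fin d) ℂ,
        (W * X * Wᴴ) * (W * Y * Wᴴ) = W * (X * Y) * Wᴴ := by
      intro X Y
      calc (W * X * Wᴴ) * (W * Y * Wᴴ)
          = W * (X * ((Wᴴ * W) * (Y * Wᴴ))) := by simp only [Matrix.mul_assoc]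
        _ = W * (X * Y) * Wᴴ := by
            rw [hWW, Matrix.one_mul, ← Matrix.mul_assoc, ← Matrix.mul_assoc,
              Matrix.mul_assoc W X Y]
    have htr2 : ((τ * τ).trace) = ∑ i, ((ev i : ℂ) * (ev i : ℂ)) := by
      rw [hspec, hmulW, Matrix.trace_mul_comm, ← Matrix.mul_assoc, hWW, Matrix.one_mul,
        Matrix.diagonal_mul_diagonal, Matrix.trace_diagonal]
    have hre2 : ((τ * τ).trace).re = ∑ i, ev i * ev i := by
      rw [htr2, Complex.re_sum]
      exact Finset.sum_congr rfl fun i _ => by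
        rw [← Complex.ofReal_mul, Complex.ofReal_re]
    rw [hre2]
    calc ∑ i, ev i * ev i ≤ ∑ i, ev j₁ * ev i := by
          refine Finset.sum_le_sum fun i _ => ?_
          exact mul_le_mul_of_nonneg_right (hj₁' i) (hev0 i)
      _ = ev j₁ := by rw [← Finset.mul_sum, hsum1, mul_one]
  · -- entropy bound
    have hterm : ∀ i, ev i * Real.log (ev i) ≤ ev i * Real.log (ev j₁) := by
      intro i
      rcases eq_or_lt_of_le (hev0 i) with h0 | h0
      · rw [← h0]
        simp
      · exact mul_le_mul_of_nonneg_left (Real.log_le_log h0 (hj₁' i)) (le_of_lt h0)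
    have hsum2 : ∑ i, ev i * Real.log (ev i) ≤ Real.log (ev j₁) := by
      calc ∑ i, ev i * Real.log (ev i) ≤ ∑ i, ev i * Real.log (ev j₁) :=
            Finset.sum_le_sum fun i _ => hterm i
        _ = Real.log (ev j₁) := by
            rw [← Finset.sum_mul, hsum1, one_mul]
    calc Real.exp (∑ i, ev i * Real.log (ev i)) ≤ Real.exp (Real.log (ev j₁)) :=
          Real.exp_le_exp.mpr hsum2
      _ = ev j₁ := Real.exp_log hpos

lemma arith_purity {x : ℝ} (N : ℕ) (hx : 0 < x) (hN : (N:ℝ) > 8 / x + 1) :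
    (3:ℝ) < (1 + x) ^ N := by
  have h1 : 1 + (N:ℝ) * x ≤ (1 + x) ^ N := one_add_mul_le_pow (by linarith) N
  have h2 : 8 < (N:ℝ) * x := by
    have h3 : (8 / x) * x = 8 := div_mul_cancel₀ 8 (ne_of_gt hx)
    nlinarith
  linarith

lemma arith_entropy {t A : ℝ} (N : ℕ) (ht : 0 < t) (hA : 1 ≤ A)
    (hN : (N:ℝ) > 8 * (A / t) ^ 2 + 1) : (3:ℝ) < (Real.exp t) ^ N := by
  have h0 : Real.exp t ^ N = Real.exp ((N:ℝ) * t) := (Real.exp_nat_mul t N).symm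
  have h2 : 2 < (N:ℝ) * t := by
    have hq : (8 * (A / t) ^ 2 + 1) * t < (N:ℝ) * t := by
      exact mul_lt_mul_of_pos_right hN ht
    have hexp : (8 * (A / t) ^ 2 + 1) * t = 8 * A ^ 2 / t + t := by
      field_simp
    have hA2 : (1:ℝ) ≤ A ^ 2 := by nlinarith
    have h8 : 2 * t < 8 * A ^ 2 + t ^ 2 := by nlinarith [sq_nonneg (t - 1)]
    have hkey : 2 < 8 * A ^ 2 / t + t := by
      rw [div_add' _ _ _ (ne_of_gt ht), lt_div_iff₀ ht]
      nlinarith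
    nlinarith [hq, hexp, hkey]
  have h3 := Real.add_one_le_exp ((N:ℝ) * t)
  rw [h0]
  linarith

lemma three_lt {d N : ℕ} {μ₁ B : ℝ} (hμpos : 0 ≤ μ₁) (hB : 0 ≤ B)
    (hμd : B ≤ μ₁ * d) (h3 : 3 < B ^ N) : 3 < μ₁ ^ N * ((d:ℝ) ^ N + 2) := by
  have h4 : B ^ N ≤ (μ₁ * (d:ℝ)) ^ N := pow_le_pow_left₀ hB hμd N
  have h5 : (μ₁ * (d:ℝ)) ^ N = μ₁ ^ N * (d:ℝ) ^ N := mul_pow _ _ _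
  nlinarith [pow_nonneg hμpos N]

/-- Put the pieces together: the N-fold Kronecker power of τ is not absolutely separable. -/
lemma key {d N m n : ℕ} (hm : 2 ≤ m) (hn : 2 ≤ n) (hmn : m * n = d ^ N)
    (τ : Matrix (Fin d) (Fin d) ℂ) (hτ : τ.PosSemidef) (htrτ : τ.trace = 1)
    (u : Fin d → ℂ) (μ₁ : ℝ) (hu1 : dotProduct (star u) u = 1)
    (heig : τ *ᵥ u = (μ₁ : ℂ) • u)
    (hbig : 3 < μ₁ ^ N * ((d:ℝ) ^ N + 2)) :
    ¬ IsAbsSep ((Matrix.reindex (biEquiv d N m n hmn) (biEquiv d N m n hmn))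
      (kronPow (fun _ : Fin N => τ))) := by
  have hσpsd := kronPow_psd (N := N) hτ
  have hσtr : (kronPow (fun _ : Fin N => τ)).trace = 1 := by
    rw [kronPow_trace]
    simp [htrτ]
  obtain ⟨hv1, hv2⟩ := kronPow_vec (N := N) τ u μ₁ heig hu1
  refine not_absSep hm hn (biEquiv d N m n hmn) _ hσpsd hσtr _ hv1 ?_
  rw [hv2]
  have hcard : Fintype.card (Fin N → Fin d) = d ^ N := by simp
  rw [hcard, ← Complex.ofReal_pow, Complex.ofReal_re]
  push_cast
  exact hbig

/-- `Φ^{⊗N}` applied to `ρ^{⊗N}` is `(Φρ)^{⊗N}`. -/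
lemma kronPowMap_kronPow {d N : ℕ}
    (Φ : Matrix (Fin d) (Fin d) ℂ →ₗ[ℂ] Matrix (Fin d) (Fin d) ℂ)
    (ρ : Matrix (Fin d) (Fin d) ℂ) :
    kronPowMap Φ (kronPow (fun _ : Fin N => ρ)) = kronPow (fun _ : Fin N => Φ ρ) := by
  classical
  ext f g
  simp only [kronPowMap, kronPow, Matrix.of_apply]
  have hrep : ρ = ∑ q : Fin d × Fin d, ρ q.1 q.2 • Matrix.single q.1 q.2 (1:ℂ) := by
    calc ρ = ∑ i, ∑ j, Matrix.single i j (ρ i j) :=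
          Matrix.matrix_eq_sum_single ρ
      _ = ∑ i : Fin d, ∑ j : Fin d, ρ i j • Matrix.single i j (1:ℂ) := by
          refine Finset.sum_congr rfl fun i _ => Finset.sum_congr rfl fun j _ => ?_
          rw [Matrix.smul_single, smul_eq_mul, mul_one]
      _ = ∑ q : Fin d × Fin d, ρ q.1 q.2 • Matrix.single q.1 q.2 (1:ℂ) :=
          (Fintype.sum_prod_type
            (fun q : Fin d × Fin d => ρ q.1 q.2 • Matrix.single q.1 q.2 (1:ℂ))).symm
  have hPhi : ∀ x y, (Φ ρ) x y
      = ∑ q : Fin d × Fin d, ρ q.1 q.2 * (Φ (Matrix.single q.1 q.2 1)) x y := by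
    intro x y
    conv_lhs => rw [hrep]
    rw [map_sum, Matrix.sum_apply]
    refine Finset.sum_congr rfl fun q _ => ?_
    rw [_root_.map_smul, Matrix.smul_apply, smul_eq_mul]
  conv_rhs => rw [Finset.prod_congr rfl fun j (_ : j ∈ Finset.univ) => hPhi (f j) (g j)]
  have hps : (∏ j : Fin N, ∑ q : Fin d × Fin d,
        ρ q.1 q.2 * (Φ (Matrix.single q.1 q.2 1)) (f j) (g j))
      = ∑ Q ∈ Fintype.piFinset (fun _ : Fin N => (Finset.univ : Finset (Fin d × Fin d))),
          ∏ j, ρ (Q j).1 (Q j).2 * (Φ (Matrix.single (Q j).1 (Q j).2 1)) (f j) (g j) :=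
    Finset.prod_univ_sum _ _
  rw [hps, Fintype.piFinset_univ]
  have hsplit : ∑ p : (Fin N → Fin d) × (Fin N → Fin d),
      ((∏ j, Φ (Matrix.single (p.1 j) (p.2 j) 1) (f j) (g j)) * ∏ j, ρ (p.1 j) (p.2 j))
      = ∑ a : Fin N → Fin d, ∑ b : Fin N → Fin d,
        ((∏ j, Φ (Matrix.single (a j) (b j) 1) (f j) (g j)) * ∏ j, ρ (a j) (b j)) :=
    Fintype.sum_prod_type
      (fun p : (Fin N → Fin d) × (Fin N → Fin d) =>
        (∏ j, Φ (Matrix.single (p.1 j) (p.2 j) 1) (f j) (g j)) * ∏ j, ρ (p.1 j) (p.2 j))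
  rw [← hsplit]
  refine Fintype.sum_equiv ((Equiv.arrowProdEquivProdArrow (Fin N) (fun _ => Fin d) (fun _ => Fin d)).symm) _ _
    fun p => ?_
  rw [← Finset.prod_mul_distrib]
  refine Finset.prod_congr rfl fun j _ => ?_
  simp only [Equiv.arrowProdEquivProdArrow, Equiv.coe_fn_symm_mk]
  ring

end Stmt9Aux

open Stmt9Aux in
theorem stmt9 (d : ℕ) (hd : 2 ≤ d)
    (Φ : Matrix (Fin d) (Fin d) ℂ →ₗ[ℂ] Matrix (Fin d) (Fin d) ℂ)
    (hpos : ∀ X, X.PosSemidef → (Φ X).PosSemidef)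
    (htr : ∀ X, (Φ X).trace = X.trace)
    (P h : ℝ)
    (hP : IsGreatest {x : ℝ | ∃ ρ, IsDM ρ ∧ x = ((Φ ρ * Φ ρ).trace).re} P)
    (hh : IsLeast {x : ℝ | ∃ ρ, ∃ hρ : IsDM ρ, x =
        -∑ i, ((hpos ρ hρ.1).isHermitian.eigenvalues i *
          Real.log ((hpos ρ hρ.1).isHermitian.eigenvalues i))} h)
    (N : ℕ) (hN : 2 ≤ N)
    (hcond : (1 < (d : ℝ) * P ∧ (N : ℝ) > 8 / ((d : ℝ) * P - 1) + 1) ∨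
      (h < Real.log d ∧ (N : ℝ) > 8 * ((Real.log d + 1) / (Real.log d - h)) ^ 2 + 1)) :
    (∃ m n : ℕ, 2 ≤ m ∧ 2 ≤ n ∧ ∃ hmn : m * n = d ^ N,
      ¬ ∀ ρ : Matrix (Fin N → Fin d) (Fin N → Fin d) ℂ, IsDM ρ →
        IsAbsSep (Matrix.reindex (biEquiv d N m n hmn) (biEquiv d N m n hmn)
          (kronPowMap Φ ρ))) ∧
    ((1 < (d : ℝ) * P ∧ (N : ℝ) > 8 / ((d : ℝ) * P - 1) + 1) →
      ∀ ρ, IsDM ρ → ((Φ ρ * Φ ρ).trace).re = P →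
        ∀ m n : ℕ, 2 ≤ m → 2 ≤ n → ∀ hmn : m * n = d ^ N,
          ¬ IsAbsSep (Matrix.reindex (biEquiv d N m n hmn) (biEquiv d N m n hmn)
            (kronPow (fun _ : Fin N => Φ ρ)))) ∧
    ((h < Real.log d ∧ (N : ℝ) > 8 * ((Real.log d + 1) / (Real.log d - h)) ^ 2 + 1) →
      ∀ ρ, ∀ hρ : IsDM ρ,
        (-∑ i, ((hpos ρ hρ.1).isHermitian.eigenvalues i *
          Real.log ((hpos ρ hρ.1).isHermitian.eigenvalues i))) = h →
        ∀ m n : ℕ, 2 ≤ m → 2 ≤ n → ∀ hmn : m * n = d ^ N,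
          ¬ IsAbsSep (Matrix.reindex (biEquiv d N m n hmn) (biEquiv d N m n hmn)
            (kronPow (fun _ : Fin N => Φ ρ)))) := by
  have hd0 : (0:ℝ) < d := by positivity
  have hd1 : (1:ℝ) < d := by exact_mod_cast hd
  have part2 : (1 < (d : ℝ) * P ∧ (N : ℝ) > 8 / ((d : ℝ) * P - 1) + 1) →
      ∀ ρ, IsDM ρ → ((Φ ρ * Φ ρ).trace).re = P →
        ∀ m n : ℕ, 2 ≤ m → 2 ≤ n → ∀ hmn : m * n = d ^ N,
          ¬ IsAbsSep (Matrix.reindex (biEquiv d N m n hmn) (biEquiv d N m n hmn)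
            (kronPow (fun _ : Fin N => Φ ρ))) := by
    rintro ⟨hdP, hNP⟩ ρ hρ hpur m n hm hn hmn
    have hτ : (Φ ρ).PosSemidef := hpos ρ hρ.1
    have htrτ : (Φ ρ).trace = 1 := by rw [htr ρ, hρ.2]
    obtain ⟨u, μ₁, hu1, heig, hμpos, hpur', _⟩ := top_eigen (Φ ρ) hτ htrτ
    have hPμ : P ≤ μ₁ := by rw [← hpur]; exact hpur'
    have hx : 0 < (d:ℝ) * P - 1 := by linarith
    have h3 : (3:ℝ) < (1 + ((d:ℝ) * P - 1)) ^ N := arith_purity N hx hNP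
    have hBeq : 1 + ((d:ℝ) * P - 1) = (d:ℝ) * P := by ring
    rw [hBeq] at h3
    have hμd : (d:ℝ) * P ≤ μ₁ * d := by nlinarith
    have hbig : 3 < μ₁ ^ N * ((d:ℝ) ^ N + 2) :=
      three_lt hμpos.le (by linarith) hμd h3
    exact key hm hn hmn (Φ ρ) hτ htrτ u μ₁ hu1 heig hbig
  have part3 : (h < Real.log d ∧ (N : ℝ) > 8 * ((Real.log d + 1) / (Real.log d - h)) ^ 2 + 1) →
      ∀ ρ, ∀ hρ : IsDM ρ,
        (-∑ i, ((hpos ρ hρ.1).isHermitian.eigenvalues i *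
          Real.log ((hpos ρ hρ.1).isHermitian.eigenvalues i))) = h →
        ∀ m n : ℕ, 2 ≤ m → 2 ≤ n → ∀ hmn : m * n = d ^ N,
          ¬ IsAbsSep (Matrix.reindex (biEquiv d N m n hmn) (biEquiv d N m n hmn)
            (kronPow (fun _ : Fin N => Φ ρ))) := by
    rintro ⟨hhd, hNh⟩ ρ hρ hentval m n hm hn hmn
    have hτ : (Φ ρ).PosSemidef := hpos ρ hρ.1
    have htrτ : (Φ ρ).trace = 1 := by rw [htr ρ, hρ.2]
    obtain ⟨u, μ₁, hu1, heig, hμpos, _, hent'⟩ := top_eigen (Φ ρ) hτ htrτ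
    have hEq : (-∑ i, (hτ.1.eigenvalues i * Real.log (hτ.1.eigenvalues i))) = h := hentval
    have hEq2 : (∑ i, (hτ.1.eigenvalues i * Real.log (hτ.1.eigenvalues i))) = -h := by
      linarith
    rw [hEq2] at hent'
    have ht : 0 < Real.log d - h := by linarith
    have hA : 1 ≤ Real.log d + 1 := by
      have := Real.log_pos hd1
      linarith
    have h3 : (3:ℝ) < (Real.exp (Real.log d - h)) ^ N := arith_entropy N ht hA hNh
    have hexp : Real.exp (Real.log d - h) = (d:ℝ) * Real.exp (-h) := by
      rw [sub_eq_add_neg, add_comm, Real.exp_add, Real.exp_log hd0]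
      ring
    have hμd : Real.exp (Real.log d - h) ≤ μ₁ * d := by
      rw [hexp]
      nlinarith [hent', Real.exp_pos (-h)]
    have hbig : 3 < μ₁ ^ N * ((d:ℝ) ^ N + 2) :=
      three_lt hμpos.le (Real.exp_pos _).le hμd h3
    exact key hm hn hmn (Φ ρ) hτ htrτ u μ₁ hu1 heig hbig
  refine ⟨?_, part2, part3⟩
  have hm2 : 2 ≤ d := hd
  have hn2 : 2 ≤ d ^ (N - 1) := le_trans hd (Nat.le_self_pow (by omega) d)
  have hmn : d * d ^ (N - 1) = d ^ N := by
    rw [← pow_succ']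
    congr 1
    omega
  refine ⟨d, d ^ (N - 1), hm2, hn2, hmn, ?_⟩
  intro hall
  rcases hcond with hc | hc
  · obtain ⟨ρ0, hρ0, hPval⟩ := hP.1
    have hbad := part2 hc ρ0 hρ0 hPval.symm d (d ^ (N - 1)) hm2 hn2 hmn
    have hDM : IsDM (kronPow (fun _ : Fin N => ρ0)) :=
      ⟨kronPow_psd hρ0.1, by rw [kronPow_trace]; simp [hρ0.2]⟩
    have hcontr := hall (kronPow (fun _ : Fin N => ρ0)) hDM
    rw [kronPowMap_kronPow] at hcontr
    exact hbad hcontr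
  · obtain ⟨ρ0, hρ0, hhval⟩ := hh.1
    have hbad := part3 hc ρ0 hρ0 hhval.symm d (d ^ (N - 1)) hm2 hn2 hmn
    have hDM : IsDM (kronPow (fun _ : Fin N => ρ0)) :=
      ⟨kronPow_psd hρ0.1, by rw [kronPow_trace]; simp [hρ0.2]⟩
    have hcontr := hall (kronPow (fun _ : Fin N => ρ0)) hDM
    rw [kronPowMap_kronPow] at hcontr
    exact hbad hcontr

end
end
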